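/- arXiv:2309.11388 — 7 statements merged into one kernel-verified Lean document; each statement's English description precedes it below -/
import Mathlib

section
/- (Kakeya–Hornich, interval criterion) Let ∑ z_n be a convergent series of positive reals with z_n ≥ z_{n+1} for all n. Then the achievement set E(z_n) = { ∑_{n∈A} z_n : A ⊆ ℕ } is a compact interval if and only if z_n ≤ ∑_{k>n} z_k for every n. -/
open Set Finset


/-- The achievement set (set of all subsums) of the series `∑_{n ≥ 1} z n`. -/
def subsums (z : ℕ → ℝ) : Set ℝ :=
  {y | ∃ c : ℕ → Bool, HasSum (fun n => if c (n + 1) then z (n + 1) else 0) y}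

/-- Greedy partial sums: `greedy a x n` is the sum of the terms `a k`, `k < n`,
chosen greedily so as not to exceed `x`. -/
private noncomputable def greedy (a : ℕ → ℝ) (x : ℝ) : ℕ → ℝ
  | 0 => 0
  | n + 1 => if greedy a x n + a n ≤ x then greedy a x n + a n else greedy a x n

private lemma mem_subsums_iff (z : ℕ → ℝ) (y : ℝ) :
    y ∈ subsums z ↔ ∃ b : ℕ → Bool, HasSum (fun n => if b n then z (n + 1) else 0) y := by
  constructor
  · rintro ⟨c, hc⟩
    exact ⟨fun n => c (n + 1), hc⟩
  · rintro ⟨b, hb⟩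
    exact ⟨fun n => b (n - 1), hb⟩

private lemma greedy_eq_sum (a : ℕ → ℝ) (x : ℝ) (n : ℕ) :
    greedy a x n = ∑ k ∈ Finset.range n, if greedy a x k + a k ≤ x then a k else 0 := by
  induction n with
  | zero => simp [greedy]
  | succ n ih =>
    rw [Finset.sum_range_succ, ← ih]
    simp only [greedy]
    split_ifs with h <;> simp

private lemma greedy_le (a : ℕ → ℝ) (x : ℝ) (hx : 0 ≤ x) (n : ℕ) : greedy a x n ≤ x := by
  induction n with
  | zero => simpa [greedy]
  | succ n ih =>
    simp only [greedy]
    split_ifs with h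
    exacts [h, ih]

private lemma summable_shift {a : ℕ → ℝ} (hsum : Summable a) (n : ℕ) :
    Summable (fun k => a (n + k)) := by
  have := (summable_nat_add_iff n).2 hsum
  exact this.congr fun k => by rw [add_comm]

private lemma tail_eq {a : ℕ → ℝ} (hsum : Summable a) (n : ℕ) :
    ∑' k, a (n + k) = a n + ∑' k, a (n + 1 + k) := by
  rw [Summable.tsum_eq_zero_add (summable_shift hsum n)]
  congr 1
  exact tsum_congr fun k => congrArg a (show n + (k + 1) = n + 1 + k by omega)

private lemma le_greedy_add_tail {a : ℕ → ℝ} (hsum : Summable a)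
    (hcond : ∀ n, a n ≤ ∑' k, a (n + 1 + k)) {x : ℝ} (hx : x ≤ ∑' k, a k) (n : ℕ) :
    x ≤ greedy a x n + ∑' k, a (n + k) := by
  induction n with
  | zero =>
    simpa [greedy] using hx
  | succ n ih =>
    have htail := tail_eq hsum n
    simp only [greedy]
    split_ifs with h
    · have : x ≤ greedy a x n + (a n + ∑' k, a (n + 1 + k)) := htail ▸ ih
      linarith
    · push_neg at h
      have := hcond n
      linarith

private lemma greedy_tendsto {a : ℕ → ℝ} (hsum : Summable a)
    (hcond : ∀ n, a n ≤ ∑' k, a (n + 1 + k)) {x : ℝ} (hx0 : 0 ≤ x)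
    (hx : x ≤ ∑' k, a k) :
    Filter.Tendsto (greedy a x) Filter.atTop (nhds x) := by
  have ht0 : Filter.Tendsto (fun n => ∑' k, a (n + k)) Filter.atTop (nhds 0) := by
    have := tendsto_sum_nat_add a
    exact this.congr fun n => tsum_congr fun k => by rw [add_comm]
  have hlow : Filter.Tendsto (fun n => x - ∑' k, a (n + k)) Filter.atTop (nhds x) := by
    simpa using (tendsto_const_nhds (x := x)).sub ht0
  refine tendsto_of_tendsto_of_tendsto_of_le_of_le hlow tendsto_const_nhds
    (fun n => ?_) (fun n => greedy_le a x hx0 n)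
  have := le_greedy_add_tail hsum hcond hx n
  linarith

/-- The hard direction: under the tail condition every point of `[0, ∑ a]` is a subsum. -/
private lemma greedy_hasSum {a : ℕ → ℝ} (hpos : ∀ n, 0 < a n) (hsum : Summable a)
    (hcond : ∀ n, a n ≤ ∑' k, a (n + 1 + k)) {x : ℝ} (hx0 : 0 ≤ x)
    (hx : x ≤ ∑' k, a k) :
    HasSum (fun k => if greedy a x k + a k ≤ x then a k else 0) x := by
  set f : ℕ → ℝ := fun k => if greedy a x k + a k ≤ x then a k else 0 with hf
  have hfnonneg : ∀ n, 0 ≤ f n := by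
    intro n; simp only [hf]; split_ifs
    · exact (hpos n).le
    · rfl
  have hfle : ∀ n, f n ≤ a n := by
    intro n; simp only [hf]; split_ifs
    · rfl
    · exact (hpos n).le
  have hfs : Summable f := Summable.of_nonneg_of_le hfnonneg hfle hsum
  have h1 : Filter.Tendsto (fun n => ∑ k ∈ range n, f k) Filter.atTop (nhds (∑' k, f k)) :=
    hfs.hasSum.tendsto_sum_nat
  have h2 : Filter.Tendsto (fun n => ∑ k ∈ range n, f k) Filter.atTop (nhds x) := by
    have := greedy_tendsto hsum hcond hx0 hx
    exact this.congr fun n => greedy_eq_sum a x n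
  have : ∑' k, f k = x := tendsto_nhds_unique h1 h2
  exact this ▸ hfs.hasSum

/-- Kakeya–Hornich interval criterion: for a convergent positive non-increasing series,
the achievement set is a compact interval iff every term is at most its tail. -/
theorem stmt_7 (z : ℕ → ℝ)
    (hpos : ∀ n, 1 ≤ n → 0 < z n)
    (hanti : ∀ n, 1 ≤ n → z (n + 1) ≤ z n)
    (hsum : Summable (fun n : ℕ => z (n + 1))) :
    (∃ p q : ℝ, p ≤ q ∧ subsums z = Set.Icc p q) ↔
      ∀ n : ℕ, 1 ≤ n → z n ≤ ∑' j : ℕ, z (n + 1 + j) := by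
  set a : ℕ → ℝ := fun n => z (n + 1) with ha
  have hapos : ∀ n, 0 < a n := fun n => hpos (n + 1) (by omega)
  have haanti : Antitone a := antitone_nat_of_succ_le fun n => hanti (n + 1) (by omega)
  constructor
  · -- interval → tail condition
    rintro ⟨p, q, hpq, hE⟩ n hn
    by_contra hcon
    push_neg at hcon
    obtain ⟨m, rfl⟩ : ∃ m, n = m + 1 := ⟨n - 1, by omega⟩
    -- T is the tail sum after index m
    set T : ℝ := ∑' k, a (m + 1 + k) with hT
    have hTcon : T = ∑' j, z (m + 1 + 1 + j) :=
      tsum_congr fun k => congrArg z (by omega)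
    have hgap : T < a m := by rw [hTcon]; exact hcon
    -- a m ∈ subsums z
    have hmem1 : a m ∈ subsums z := by
      rw [mem_subsums_iff]
      refine ⟨fun k => decide (k = m), ?_⟩
      have heq : (fun k => if decide (k = m) = true then z (k + 1) else 0)
          = fun k => if k = m then a m else 0 := by
        funext k; by_cases h : k = m <;> simp [h, ha]
      rw [heq]
      exact hasSum_ite_eq m (a m)
    -- the tail sum T ∈ subsums z
    have hTsum : HasSum (fun k => if decide (m < k) = true then z (k + 1) else 0) T := by
      set g : ℕ → ℝ := fun k => if decide (m < k) = true then z (k + 1) else 0 with hg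
      have hi : Function.Injective (fun k : ℕ => k + (m + 1)) := add_left_injective (m + 1)
      have hzero : ∀ x, x ∉ Set.range (fun k : ℕ => k + (m + 1)) → g x = 0 := by
        intro x hx
        have : ¬ m < x := by
          intro hlt
          exact hx ⟨x - (m + 1), show x - (m + 1) + (m + 1) = x by omega⟩
        simp [hg, this]
      rw [← Function.Injective.hasSum_iff hi hzero]
      have : (g ∘ fun k : ℕ => k + (m + 1)) = fun k => a (m + 1 + k) := by
        funext k
        have h1 : m < k + (m + 1) := by omega
        simp only [Function.comp, hg, h1, decide_true, if_true, ha]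
        exact congrArg z (by omega)
      rw [this]
      exact ((summable_shift hsum (m + 1)).hasSum)
    have hmem2 : T ∈ subsums z := by
      rw [mem_subsums_iff]
      exact ⟨fun k => decide (m < k), hTsum⟩
    -- the midpoint w lies in the interval but not in subsums z
    set w : ℝ := (T + a m) / 2 with hw
    have hw1 : T < w := by rw [hw]; linarith
    have hw2 : w < a m := by rw [hw]; linarith
    have hwmem : w ∈ subsums z := by
      rw [hE]
      rw [hE] at hmem1 hmem2
      exact ⟨le_trans hmem2.1 hw1.le, le_trans hw2.le hmem1.2⟩
    rw [mem_subsums_iff] at hwmem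
    obtain ⟨b, hb⟩ := hwmem
    by_cases hex : ∃ k, k ≤ m ∧ b k = true
    · obtain ⟨k, hk, hbk⟩ := hex
      have hnn : ∀ j, 0 ≤ if b j = true then z (j + 1) else 0 := by
        intro j; split_ifs
        · exact (hapos j).le
        · rfl
      have h1 : (if b k = true then z (k + 1) else 0) ≤ w := le_hasSum hb k fun j _ => hnn j
      rw [hbk, if_pos rfl] at h1
      have h2 : a m ≤ a k := haanti hk
      have : a m ≤ w := le_trans h2 h1
      linarith
    · push_neg at hex
      have hle : ∀ k, (if b k = true then z (k + 1) else 0)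
          ≤ (if decide (m < k) = true then z (k + 1) else 0) := by
        intro k
        by_cases hkm : k ≤ m
        · have : b k = false := by
            cases h : b k
            · rfl
            · exact absurd h (hex k hkm)
          simp [this]
          split_ifs
          · exact (hapos k).le
          · rfl
        · have hmk : m < k := by omega
          simp only [hmk, decide_true, if_true]
          split_ifs with h
          · exact le_rfl
          · exact (hapos k).le
      have : w ≤ T := hasSum_le hle hb hTsum
      linarith
  · -- tail condition → interval [0, S]
    intro hcond
    set S : ℝ := ∑' k, a k with hS
    have hcond' : ∀ n, a n ≤ ∑' k, a (n + 1 + k) := by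
      intro n
      have := hcond (n + 1) (by omega)
      calc a n = z (n + 1) := rfl
        _ ≤ ∑' j, z (n + 1 + 1 + j) := this
        _ = ∑' k, a (n + 1 + k) := tsum_congr fun k => congrArg z (by omega)
    refine ⟨0, S, tsum_nonneg fun n => (hapos n).le, ?_⟩
    ext y
    rw [mem_subsums_iff]
    constructor
    · rintro ⟨b, hb⟩
      constructor
      · refine hasSum_le (f := fun _ => (0 : ℝ)) (fun n => ?_) hasSum_zero hb
        split_ifs
        · exact (hapos n).le
        · rfl
      · refine hasSum_le (fun n => ?_) hb hsum.hasSum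
        split_ifs
        · rfl
        · exact (hapos n).le
    · rintro ⟨hy0, hyS⟩
      refine ⟨fun k => decide (greedy a y k + a k ≤ y), ?_⟩
      have hgs := greedy_hasSum hapos hsum hcond' hy0 hyS
      have heq : (fun k => if decide (greedy a y k + a k ≤ y) = true then z (k + 1) else 0)
          = fun k => if greedy a y k + a k ≤ y then a k else 0 := by
        funext k
        simp [decide_eq_true_eq, ha]
      rw [heq]
      exact hgs
end

section
/- (Kakeya–Hornich, finite-union criterion) Let ∑ z_n be a convergent series of positive reals with z_n ≥ z_{n+1} for all n. Then E(z_n) is a finite union of closed bounded intervals if and only if z_n ≤ ∑_{k>n} z_k for all but finitely many n. -/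
open Set Finset

namespace KakeyaAux

/-- Achievement set with all indices allowed. -/
def E (b : ℕ → ℝ) : Set ℝ :=
  {y | ∃ c : ℕ → Bool, HasSum (fun n => if c n then b n else 0) y}

variable {b : ℕ → ℝ}

lemma summable_sel (hb : ∀ n, 0 ≤ b n) (hs : Summable b) (c : ℕ → Bool) :
    Summable (fun n => if c n then b n else 0) :=
  hs.of_nonneg_of_le (fun n => by by_cases h : c n <;> simp [h, hb n])
    (fun n => by by_cases h : c n <;> simp [h, hb n])

lemma E_subset (hb : ∀ n, 0 ≤ b n) (hs : Summable b) :
    E b ⊆ Set.Icc 0 (∑' n, b n) := by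
  rintro y ⟨c, hc⟩
  constructor
  · exact hc.nonneg fun n => by by_cases h : c n <;> simp [h, hb n]
  · rw [← hc.tsum_eq]
    exact Summable.tsum_le_tsum (fun n => by by_cases h : c n <;> simp [h, hb n])
      (summable_sel hb hs c) hs

/-- The greedy partial sums. -/
noncomputable def greedy (b : ℕ → ℝ) (x : ℝ) : ℕ → ℝ
  | 0 => 0
  | n + 1 => if greedy b x n + b n ≤ x then greedy b x n + b n else greedy b x n

lemma greedy_eq_sum (x : ℝ) (n : ℕ) :
    greedy b x n = ∑ k ∈ Finset.range n,
      (if (decide (greedy b x k + b k ≤ x) : Bool) then b k else 0) := by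
  induction n with
  | zero => simp [greedy]
  | succ n ih =>
    rw [Finset.sum_range_succ, ← ih, greedy]
    by_cases h : greedy b x n + b n ≤ x <;> simp [h]

lemma greedy_le (x : ℝ) (hx : 0 ≤ x) : ∀ n, greedy b x n ≤ x := by
  intro n
  induction n with
  | zero => simpa [greedy]
  | succ n ih =>
    rw [greedy]
    split <;> [assumption; exact ih]

lemma tail_split (hs : Summable b) (n : ℕ) :
    ∑' k, b (k + n) = b n + ∑' k, b (k + (n + 1)) := by
  rw [Summable.tsum_eq_zero_add ((summable_nat_add_iff n).2 hs)]
  congr 1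
  · simp
  · apply tsum_congr; intro k; congr 1; omega

lemma greedy_tail (hs : Summable b)
    (hcond : ∀ n, b n ≤ ∑' k, b (k + (n + 1))) (x : ℝ)
    (hx2 : x ≤ ∑' n, b n) : ∀ n, x - greedy b x n ≤ ∑' k, b (k + n) := by
  intro n
  induction n with
  | zero =>
    simpa [greedy] using hx2
  | succ n ih =>
    rw [greedy]
    rw [tail_split hs n] at ih
    split
    case isTrue h => linarith
    case isFalse h =>
      push_neg at h
      have := hcond n
      linarith

lemma greedy_tendsto (hs : Summable b)
    (hcond : ∀ n, b n ≤ ∑' k, b (k + (n + 1))) (x : ℝ) (hx : 0 ≤ x)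
    (hx2 : x ≤ ∑' n, b n) :
    Filter.Tendsto (greedy b x) Filter.atTop (nhds x) := by
  have h1 : Filter.Tendsto (fun n => x - ∑' k, b (k + n)) Filter.atTop (nhds x) := by
    have := (tendsto_const_nhds (x := x) (f := Filter.atTop)).sub (tendsto_sum_nat_add b)
    simpa using this
  exact tendsto_of_tendsto_of_tendsto_of_le_of_le h1 tendsto_const_nhds
    (fun n => by have := greedy_tail hs hcond x hx2 n; linarith)
    (fun n => greedy_le x hx n)

lemma Icc_subset_E (hb : ∀ n, 0 ≤ b n) (hs : Summable b)
    (hcond : ∀ n, b n ≤ ∑' k, b (k + (n + 1))) :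
    Set.Icc 0 (∑' n, b n) ⊆ E b := by
  rintro x ⟨hx, hx2⟩
  refine ⟨fun n => decide (greedy b x n + b n ≤ x), ?_⟩
  set f : ℕ → ℝ := fun n => if (decide (greedy b x n + b n ≤ x) : Bool) then b n else 0 with hf
  have hsf : Summable f := summable_sel hb hs _
  have h1 : Filter.Tendsto (fun n => ∑ k ∈ Finset.range n, f k) Filter.atTop (nhds (∑' n, f n)) :=
    hsf.hasSum.tendsto_sum_nat
  have h2 : Filter.Tendsto (fun n => ∑ k ∈ Finset.range n, f k) Filter.atTop (nhds x) := by
    have := greedy_tendsto hs hcond x hx hx2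
    convert this using 2 with n
    exact (greedy_eq_sum x n).symm
  have : ∑' n, f n = x := tendsto_nhds_unique h1 h2
  exact this ▸ hsf.hasSum

/-- Kakeya's interval theorem. -/
lemma E_eq_Icc (hb : ∀ n, 0 ≤ b n) (hs : Summable b)
    (hcond : ∀ n, b n ≤ ∑' k, b (k + (n + 1))) :
    E b = Set.Icc 0 (∑' n, b n) :=
  le_antisymm (E_subset hb hs) (Icc_subset_E hb hs hcond)

/-- Decomposition of the achievement set when the tail condition holds from `M` on. -/
lemma E_decomp (hb : ∀ n, 0 ≤ b n) (hs : Summable b) (M : ℕ)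
    (hcond : ∀ n, M ≤ n → b n ≤ ∑' k, b (k + (n + 1))) :
    E b = ⋃ F ∈ (Finset.range M).powerset,
      Set.Icc (∑ i ∈ F, b i) ((∑ i ∈ F, b i) + ∑' k, b (k + M)) := by
  classical
  have hs' : Summable (fun n => b (n + M)) := (summable_nat_add_iff M).2 hs
  have hEbb : E (fun n => b (n + M)) = Set.Icc 0 (∑' k, b (k + M)) := by
    apply E_eq_Icc (fun n => hb _) hs'
    intro n
    calc b (n + M) ≤ ∑' k, b (k + (n + M + 1)) := hcond (n + M) (by omega)
      _ = ∑' k, b (k + (n + 1) + M) := tsum_congr fun k => by congr 1; omega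
  ext y
  simp only [Set.mem_iUnion, Finset.mem_powerset, exists_prop]
  constructor
  · rintro ⟨c, hc⟩
    set f : ℕ → ℝ := fun n => if c n then b n else 0 with hf
    set σ : ℝ := ∑ i ∈ Finset.range M, f i with hσ
    have h2 : HasSum (fun n => f (n + M)) (y - σ) := by
      rw [hasSum_nat_add_iff M]
      simpa [hσ] using hc
    have h3 : y - σ ∈ E (fun n => b (n + M)) := ⟨fun n => c (n + M), h2⟩
    rw [hEbb] at h3
    obtain ⟨h30, h31⟩ := h3
    refine ⟨(Finset.range M).filter (fun i => c i), Finset.filter_subset _ _, ?_, ?_⟩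
    · rw [Finset.sum_filter]; linarith
    · rw [Finset.sum_filter]; linarith
  · rintro ⟨F, hF, hx1, hx2⟩
    set σ : ℝ := ∑ i ∈ F, b i with hσ
    have h3 : y - σ ∈ E (fun n => b (n + M)) := by
      rw [hEbb]; constructor <;> [linarith; linarith]
    obtain ⟨c', hc'⟩ := h3
    refine ⟨fun n => if n < M then decide (n ∈ F) else c' (n - M), ?_⟩
    set c : ℕ → Bool := fun n => if n < M then decide (n ∈ F) else c' (n - M) with hcdef
    set f : ℕ → ℝ := fun n => if c n then b n else 0 with hf
    have key : (fun n => f (n + M)) = fun n => if c' n then b (n + M) else 0 := by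
      ext n
      simp only [hf, hcdef]
      rw [if_neg (show ¬ n + M < M by omega)]
      simp
    have h4 : HasSum f ((y - σ) + ∑ i ∈ Finset.range M, f i) := by
      rw [← hasSum_nat_add_iff M, key]
      exact hc'
    have h5 : ∑ i ∈ Finset.range M, f i = σ := by
      have : ∀ i ∈ Finset.range M, f i = if i ∈ F then b i else 0 := by
        intro i hi
        simp only [hf, hcdef, if_pos (Finset.mem_range.1 hi)]
        simp
      rw [Finset.sum_congr rfl this, Finset.sum_ite_mem,
        Finset.inter_eq_right.2 hF]
    rw [h5] at h4
    simpa using h4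

/-- The tail `r m = ∑_{k > m} b k` is a subsum. -/
lemma tail_mem_E (hs : Summable b) (m : ℕ) : (∑' k, b (k + (m + 1))) ∈ E b := by
  refine ⟨fun n => decide (m + 1 ≤ n), ?_⟩
  set f : ℕ → ℝ := fun n => if (decide (m + 1 ≤ n) : Bool) then b n else 0 with hf
  have key : (fun n => f (n + (m + 1))) = fun n => b (n + (m + 1)) := by
    ext n
    simp only [hf]
    rw [if_pos (by simp)]
  have h1 : HasSum (fun n => f (n + (m + 1))) (∑' k, b (k + (m + 1))) := by
    rw [key]
    exact ((summable_nat_add_iff (m + 1)).2 hs).hasSum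
  have h2 := (hasSum_nat_add_iff (m + 1)).1 h1
  have h3 : ∑ i ∈ Finset.range (m + 1), f i = 0 := by
    apply Finset.sum_eq_zero
    intro i hi
    have hni : ¬ (m + 1 ≤ i) := by have := Finset.mem_range.1 hi; omega
    simp [hf, show ¬ m < i by omega]
  rw [h3, add_zero] at h2
  exact h2

/-- Gap lemma: every subsum is either `≤ r m` or `≥ b m`. -/
lemma gap (hb : ∀ n, 0 ≤ b n) (hmono : ∀ n, b (n + 1) ≤ b n) (hs : Summable b)
    (m : ℕ) {y : ℝ} (hy : y ∈ E b) : y ≤ ∑' k, b (k + (m + 1)) ∨ b m ≤ y := by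
  obtain ⟨c, hc⟩ := hy
  set f : ℕ → ℝ := fun n => if c n then b n else 0 with hf
  have hfnn : ∀ n, 0 ≤ f n := fun n => by by_cases h : c n <;> simp [hf, h, hb n]
  have hfle : ∀ n, f n ≤ b n := fun n => by by_cases h : c n <;> simp [hf, h, hb n]
  by_cases hcase : ∃ k, k ≤ m ∧ c k = true
  · right
    obtain ⟨k, hkm, hck⟩ := hcase
    have hanti : Antitone b := antitone_nat_of_succ_le hmono
    have h1 : b k ≤ y := by
      rw [← hc.tsum_eq]
      have : f k = b k := by simp [hf, hck]
      calc b k = f k := this.symm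
        _ ≤ ∑' n, f n := Summable.le_tsum hc.summable k (fun j _ => hfnn j)
    exact le_trans (hanti hkm) h1
  · left
    push_neg at hcase
    have h3 : ∑ i ∈ Finset.range (m + 1), f i = 0 := by
      apply Finset.sum_eq_zero
      intro i hi
      have him : i ≤ m := by have := Finset.mem_range.1 hi; omega
      have : c i = false := Bool.eq_false_iff.2 (by simpa using hcase i him)
      simp [hf, this]
    have h2 : HasSum (fun n => f (n + (m + 1))) (y - 0) := by
      rw [hasSum_nat_add_iff (m + 1), ← h3] at *
      simpa [h3] using hc
    have h4 : y = ∑' n, f (n + (m + 1)) := by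
      simpa using h2.tsum_eq.symm
    rw [h4]
    exact Summable.tsum_le_tsum (fun n => hfle _) h2.summable ((summable_nat_add_iff (m + 1)).2 hs)

/-- Strict antitonicity of tails when the terms are positive. -/
lemma tail_strict (hb : ∀ n, 0 < b n) (hs : Summable b) (m : ℕ) :
    (∑' k, b (k + (m + 2))) < ∑' k, b (k + (m + 1)) := by
  have h1 : ∑' k, b (k + (m + 1)) = b (m + 1) + ∑' k, b (k + (m + 2)) := by
    rw [Summable.tsum_eq_zero_add ((summable_nat_add_iff (m + 1)).2 hs)]
    congr 1
    · simp
    · apply tsum_congr; intro k; congr 1; omega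
  rw [h1]
  linarith [hb (m + 1)]

/-- If the tail condition fails infinitely often, `E b` is not a finite union of
closed intervals. -/
lemma not_finite_union (hb : ∀ n, 0 < b n) (hmono : ∀ n, b (n + 1) ≤ b n)
    (hs : Summable b)
    (hbad : ∀ M : ℕ, ∃ m, M ≤ m ∧ (∑' k, b (k + (m + 1))) < b m)
    (S : Finset (ℝ × ℝ)) (hS : E b = ⋃ p ∈ S, Set.Icc p.1 p.2) : False := by
  set r : ℕ → ℝ := fun m => ∑' k, b (k + (m + 1)) with hr
  have hrmem : ∀ m, r m ∈ E b := fun m => tail_mem_E hs m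
  have hstrict : StrictAnti r := by
    apply strictAnti_nat_of_succ_lt
    intro m
    exact tail_strict hb hs m
  have hend : ∀ m, r m < b m → r m ∈ (S.image Prod.snd : Finset ℝ) := by
    intro m hm
    have h1 : r m ∈ ⋃ p ∈ S, Set.Icc p.1 p.2 := hS ▸ hrmem m
    simp only [Set.mem_iUnion, exists_prop] at h1
    obtain ⟨p, hpS, hp1, hp2⟩ := h1
    rcases eq_or_lt_of_le hp2 with heq | hlt
    · rw [Finset.mem_image]
      exact ⟨p, hpS, heq.symm⟩
    · exfalso
      set y : ℝ := min p.2 ((r m + b m) / 2) with hy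
      have hy1 : r m < y := lt_min hlt (by linarith)
      have hy2 : y < b m := lt_of_le_of_lt (min_le_right _ _) (by linarith)
      have hyE : y ∈ E b := by
        rw [hS]
        simp only [Set.mem_iUnion, exists_prop]
        exact ⟨p, hpS, le_trans hp1 (le_of_lt hy1), min_le_left _ _⟩
      rcases gap (fun n => (hb n).le) hmono hs m hyE with h | h
      · exact absurd h (not_le.2 hy1)
      · exact absurd h (not_le.2 hy2)
  have hinf : Set.Infinite {m | r m < b m} := by
    apply Set.infinite_of_forall_exists_gt
    intro a
    obtain ⟨m, hm1, hm2⟩ := hbad (a + 1)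
    exact ⟨m, hm2, by omega⟩
  have himg : Set.Infinite (r '' {m | r m < b m}) :=
    Set.Infinite.image (Set.injOn_of_injective hstrict.injective) hinf
  have hsub : r '' {m | r m < b m} ⊆ (S.image Prod.snd : Finset ℝ) := by
    rintro _ ⟨m, hm, rfl⟩
    exact hend m hm
  exact himg ((S.image Prod.snd).finite_toSet.subset hsub)

end KakeyaAux

/-- Kakeya–Hornich finite-union criterion: the achievement set is a finite union of closed
bounded intervals iff `z n ≤ tail` for all but finitely many `n`. -/
theorem stmt_9 (z : ℕ → ℝ)
    (hpos : ∀ n, 1 ≤ n → 0 < z n)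
    (hanti : ∀ n, 1 ≤ n → z (n + 1) ≤ z n)
    (hsum : Summable (fun n : ℕ => z (n + 1))) :
    (∃ S : Finset (ℝ × ℝ), (∀ p ∈ S, p.1 ≤ p.2) ∧
        subsums z = ⋃ p ∈ S, Set.Icc p.1 p.2) ↔
      ∃ N, ∀ n, N ≤ n → z n ≤ ∑' j : ℕ, z (n + 1 + j) := by
  classical
  set a : ℕ → ℝ := fun n => z (n + 1) with ha
  have hb0 : ∀ n, 0 < a n := fun n => hpos (n + 1) (by omega)
  have hmono : ∀ n, a (n + 1) ≤ a n := fun n => hanti (n + 1) (by omega)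
  have hs : Summable a := hsum
  have hsE : subsums z = KakeyaAux.E a := by
    ext y
    constructor
    · rintro ⟨c, hc⟩
      exact ⟨fun n => c (n + 1), hc⟩
    · rintro ⟨d, hd⟩
      refine ⟨fun n => d (n - 1), ?_⟩
      have : (fun n => if (fun n => d (n - 1)) (n + 1) then z (n + 1) else 0)
          = fun n => if d n then a n else 0 := by
        ext n; simp [ha]
      rw [this]
      exact hd
  constructor
  · rintro ⟨S, _, hE⟩
    by_contra hnot
    push_neg at hnot
    refine KakeyaAux.not_finite_union hb0 hmono hs ?_ S (hsE ▸ hE)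
    intro M
    obtain ⟨n, hn1, hn2⟩ := hnot (M + 1)
    obtain ⟨m, rfl⟩ : ∃ m, n = m + 1 := ⟨n - 1, by omega⟩
    refine ⟨m, by omega, ?_⟩
    have heq : ∑' k, a (k + (m + 1)) = ∑' j, z (m + 1 + 1 + j) :=
      tsum_congr fun k => by simp only [ha]; congr 1; omega
    rw [heq]
    exact hn2
  · rintro ⟨N, hN⟩
    have hcond : ∀ m, N ≤ m → a m ≤ ∑' k, a (k + (m + 1)) := by
      intro m hm
      have h1 := hN (m + 1) (by omega)
      have heq : ∑' k, a (k + (m + 1)) = ∑' j, z (m + 1 + 1 + j) :=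
        tsum_congr fun k => by simp only [ha]; congr 1; omega
      rw [heq]
      exact h1
    set T : ℝ := ∑' k, a (k + N) with hT
    have hT0 : 0 ≤ T := tsum_nonneg fun k => (hb0 _).le
    refine ⟨((Finset.range N).powerset).image
      (fun F => ((∑ i ∈ F, a i), (∑ i ∈ F, a i) + T)), ?_, ?_⟩
    · intro p hp
      simp only [Finset.mem_image] at hp
      obtain ⟨F, _, rfl⟩ := hp
      simpa using hT0
    · rw [hsE, KakeyaAux.E_decomp (fun n => (hb0 n).le) hs N hcond]
      ext y
      simp only [Set.mem_iUnion, Finset.mem_image, exists_prop, Finset.mem_powerset]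
      constructor
      · rintro ⟨F, hF, hy⟩
        exact ⟨_, ⟨F, hF, rfl⟩, hy⟩
      · rintro ⟨p, ⟨F, hF, rfl⟩, hy⟩
        exact ⟨F, hF, hy⟩
end

section
/- Let f be monotone increasing on [0,ε] with a·x^r ≤ f(x) ≤ b·x^r on [0,ε] (a,b,r > 0, ε ∈ (0,1)), and let k₁ ≥ ... ≥ k_m > 0. Set U_j = k_{j+1}+...+k_m, L_j = k₁+...+k_j, K = L_m, and d_I = (max_{1≤j≤m} (b·k_j − a·U_j)/(b·k_j + a·L_j))^{1/r}. Then for every x ∈ [d_I, ε] and every n ≥ 1, the tail inequality w_n(x) ≤ ∑_{ℓ>n} w_ℓ(x) holds; consequently the achievement set E(w_n(x)) is a compact interval. -/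
open Set Finset

/-- `g m n = 1 + ((n-1) mod m)`: the index of the coefficient used in the `n`-th term. -/
def mgIdx (m n : ℕ) : ℕ := 1 + (n - 1) % m

/-- The `n`-th term (for `n ≥ 1`) of the generalized multigeometric series:
`w_n(x) = k_{g(n)} · f(x^⌊(m+n-1)/m⌋)`. -/
noncomputable def mgTerm (k : ℕ → ℝ) (f : ℝ → ℝ) (m n : ℕ) (x : ℝ) : ℝ :=
  k (mgIdx m n) * f (x ^ ((m + n - 1) / m))

/-- `K = k₁ + ⋯ + k_m`. -/
noncomputable def Ksum (k : ℕ → ℝ) (m : ℕ) : ℝ := ∑ i ∈ Finset.Icc 1 m, k i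

/-- `U_j = k_{j+1} + ⋯ + k_m`. -/
noncomputable def Usum (k : ℕ → ℝ) (m j : ℕ) : ℝ := ∑ i ∈ Finset.Icc (j + 1) m, k i

/-- `L_j = k₁ + ⋯ + k_j`. -/
noncomputable def Lsum (k : ℕ → ℝ) (j : ℕ) : ℝ := ∑ i ∈ Finset.Icc 1 j, k i

open Filter Topology in
lemma greedy_interval (v : ℕ → ℝ) (h0 : ∀ n, 0 ≤ v n) (hs : Summable v)
    (ht : ∀ n, v n ≤ ∑' j, v (n + 1 + j)) :
    {y | ∃ c : ℕ → Bool, HasSum (fun n => if c n then v n else 0) y}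
      = Set.Icc 0 (∑' n, v n) := by
  ext y
  simp only [Set.mem_setOf_eq, Set.mem_Icc]
  constructor
  · rintro ⟨c, hc⟩
    constructor
    · refine hasSum_le (fun n => ?_) hasSum_zero hc
      by_cases h : c n <;> simp [h, h0 n]
    · refine hasSum_le (fun n => ?_) hc hs.hasSum
      by_cases h : c n <;> simp [h, h0 n]
  · rintro ⟨hy0, hyS⟩
    classical
    set s : ℕ → ℝ := fun n =>
      Nat.rec (0:ℝ) (fun i si => if si + v i ≤ y then si + v i else si) n with hsdef
    have hs0 : s 0 = 0 := rfl
    have hsucc : ∀ n, s (n+1) = if s n + v n ≤ y then s n + v n else s n := fun n => rfl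
    have hshift : ∀ n : ℕ, Summable (fun j => v (n + j)) := by
      intro n
      have := (summable_nat_add_iff n).2 hs
      simpa [add_comm] using this
    have hT : ∀ n, (∑' j, v (n + j)) = v n + ∑' j, v (n + 1 + j) := by
      intro n
      rw [Summable.tsum_eq_zero_add (hshift n)]
      simp only [Nat.add_zero]
      congr 1
      exact tsum_congr fun i => congrArg v (by omega)
    have inv : ∀ n, s n ≤ y ∧ y ≤ s n + ∑' j, v (n + j) := by
      intro n
      induction n with
      | zero =>
        refine ⟨by simpa [hs0] using hy0, ?_⟩
        simpa [hs0] using hyS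
      | succ n ih =>
        rcases ih with ⟨ih1, ih2⟩
        rw [hsucc n]
        by_cases h : s n + v n ≤ y
        · rw [if_pos h]
          have hTn := hT n
          exact ⟨h, by linarith⟩
        · rw [if_neg h]
          push_neg at h
          have h2 := ht n
          exact ⟨ih1, by linarith⟩
    have hTt : Tendsto (fun n => ∑' j, v (n + j)) atTop (𝓝 0) := by
      have := tendsto_sum_nat_add v
      simpa [add_comm] using this
    have hst : Tendsto s atTop (𝓝 y) := by
      have h1 : Tendsto (fun n => y - ∑' j, v (n + j)) atTop (𝓝 y) := by
        simpa using hTt.const_sub y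
      refine tendsto_of_tendsto_of_tendsto_of_le_of_le h1 tendsto_const_nhds ?_ ?_
      · intro n; dsimp only; linarith [(inv n).2]
      · intro n; exact (inv n).1
    refine ⟨fun n => decide (s n + v n ≤ y), ?_⟩
    have hps : ∀ n, ∑ i ∈ Finset.range n,
        (if decide (s i + v i ≤ y) then v i else 0) = s n := by
      intro n
      induction n with
      | zero => simp [hs0]
      | succ n ih =>
        rw [Finset.sum_range_succ, ih, hsucc n]
        by_cases h : s n + v n ≤ y <;> simp [h]
    rw [hasSum_iff_tendsto_nat_of_nonneg
      (fun i => by by_cases h : (s i + v i ≤ y) <;> simp [h, h0 i])]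
    simpa only [hps] using hst

noncomputable def phiAux (k : ℕ → ℝ) (m : ℕ) (y : ℝ) (ℓ : ℕ) : ℝ :=
  k (mgIdx m ℓ) * y ^ ((m + ℓ - 1) / m)

lemma phiAux_eval (k : ℕ → ℝ) (m : ℕ) (y : ℝ) (t i : ℕ) (hm : 0 < m)
    (h1 : 1 ≤ i) (h2 : i ≤ m) : phiAux k m y (t * m + i) = k i * y ^ (t + 1) := by
  have hg : mgIdx m (t * m + i) = i := by
    unfold mgIdx
    rw [show t * m + i - 1 = i - 1 + t * m by omega, Nat.add_mul_mod_self_right,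
      Nat.mod_eq_of_lt (by omega)]
    omega
  have hp : (m + (t * m + i) - 1) / m = t + 1 := by
    rw [show m + (t * m + i) - 1 = i - 1 + (t + 1) * m by
      have : (t+1)*m = t*m + m := by ring
      omega]
    rw [Nat.add_mul_div_right _ _ hm, Nat.div_eq_of_lt (by omega)]
    omega
  rw [phiAux, hg, hp]

lemma blocksum (k : ℕ → ℝ) (m : ℕ) (y : ℝ) (hm : 0 < m) (t i0 : ℕ) (h : i0 ≤ m) :
    ∑ ℓ ∈ Finset.Ioc (t * m + i0) (t * m + m), phiAux k m y ℓ
      = (∑ i ∈ Finset.Icc (i0 + 1) m, k i) * y ^ (t + 1) := by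
  rw [Finset.sum_mul]
  rw [show Finset.Ioc (t*m + i0) (t*m + m) = Finset.Ico (t*m + i0 + 1) (t*m + m + 1) by
    rw [Finset.Ico_add_one_right_eq_Icc, Finset.Icc_add_one_left_eq_Ioc]]
  rw [show Finset.Icc (i0 + 1) m = Finset.Ico (i0 + 1) (m + 1) by
    rw [Finset.Ico_add_one_right_eq_Icc]]
  rw [Finset.sum_Ico_eq_sum_range, Finset.sum_Ico_eq_sum_range]
  rw [show t*m + m + 1 - (t*m + i0 + 1) = m + 1 - (i0 + 1) by omega]
  refine Finset.sum_congr rfl fun j hj => ?_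
  rw [Finset.mem_range] at hj
  rw [show t*m + i0 + 1 + j = t*m + (i0 + 1 + j) by omega]
  exact phiAux_eval k m y t (i0 + 1 + j) hm (by omega) (by omega)

open Filter Topology in
/-- On `[d_I, ε]` every term of the generalized multigeometric series is at most its tail,
and hence the achievement set is a compact interval. -/
theorem stmt_10 (f : ℝ → ℝ) (a b r ε : ℝ) (ha : 0 < a) (hb : 0 < b) (hr : 0 < r)
    (hε : 0 < ε) (hε1 : ε < 1)
    (hmono : MonotoneOn f (Set.Icc 0 ε))
    (hf : ∀ x ∈ Set.Icc (0:ℝ) ε, a * x ^ r ≤ f x ∧ f x ≤ b * x ^ r)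
    (m : ℕ) (hm : 1 ≤ m) (k : ℕ → ℝ)
    (hkmono : ∀ i j, 1 ≤ i → i ≤ j → j ≤ m → k j ≤ k i)
    (hkpos : 0 < k m)
    (dI : ℝ)
    (hdI : dI = ((Finset.Icc 1 m).sup' (Finset.nonempty_Icc.mpr hm)
        (fun j => (b * k j - a * Usum k m j) / (b * k j + a * Lsum k j))) ^ (1 / r))
    (hdIε : dI ≤ ε) :
    ∀ x ∈ Set.Icc dI ε,
      (∀ n : ℕ, 1 ≤ n → mgTerm k f m n x ≤ ∑' j : ℕ, mgTerm k f m (n + 1 + j) x) ∧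
      ∃ p q : ℝ, p ≤ q ∧ subsums (fun n => mgTerm k f m n x) = Set.Icc p q := by
  have hm0 : 0 < m := hm
  have hkpos' : ∀ i, 1 ≤ i → i ≤ m → 0 < k i := fun i h1 h2 =>
    lt_of_lt_of_le hkpos (hkmono i m h1 h2 le_rfl)
  have hLpos : ∀ j, 1 ≤ j → j ≤ m → 0 < Lsum k j := by
    intro j h1 h2
    refine Finset.sum_pos (fun i hi => ?_) ⟨1, Finset.mem_Icc.mpr ⟨le_rfl, h1⟩⟩
    rw [Finset.mem_Icc] at hi
    exact hkpos' i hi.1 (hi.2.trans h2)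
  have hKpos : 0 < Ksum k m := hLpos m hm le_rfl
  have hUnn : ∀ j, 0 ≤ Usum k m j := by
    intro j
    refine Finset.sum_nonneg fun i hi => ?_
    rw [Finset.mem_Icc] at hi
    exact (hkpos' i (by omega) hi.2).le
  set M := ((Finset.Icc 1 m).sup' (Finset.nonempty_Icc.mpr hm)
      (fun j => (b * k j - a * Usum k m j) / (b * k j + a * Lsum k j))) with hMdef
  have hMpos : 0 < M := by
    have hmem : m ∈ Finset.Icc 1 m := Finset.mem_Icc.mpr ⟨hm, le_rfl⟩
    have hle := Finset.le_sup' (f := fun j =>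
      (b * k j - a * Usum k m j) / (b * k j + a * Lsum k j)) hmem
    refine lt_of_lt_of_le ?_ hle
    have hU : Usum k m m = 0 := by
      rw [Usum, Finset.Icc_eq_empty (by omega), Finset.sum_empty]
    rw [hU, mul_zero, sub_zero]
    have hL := hLpos m hm le_rfl
    exact div_pos (mul_pos hb hkpos)
      (by linarith [mul_pos hb hkpos, mul_pos ha hL])
  have hdIpos : 0 < dI := by
    rw [hdI]; exact Real.rpow_pos_of_pos hMpos _
  have hdIr : dI ^ r = M := by
    rw [hdI, ← Real.rpow_mul hMpos.le, one_div, inv_mul_cancel₀ hr.ne', Real.rpow_one]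
  intro x hx
  obtain ⟨hx1, hx2⟩ := hx
  have hx0 : 0 < x := lt_of_lt_of_le hdIpos hx1
  have hxlt1 : x < 1 := lt_of_le_of_lt hx2 hε1
  set y := x ^ r with hydef
  have hy0 : 0 < y := Real.rpow_pos_of_pos hx0 r
  have hy1 : y < 1 := Real.rpow_lt_one hx0.le hxlt1 hr
  have hMy : M ≤ y := by
    rw [← hdIr, hydef]
    exact Real.rpow_le_rpow hdIpos.le hx1 hr.le
  have hyj : ∀ j, 1 ≤ j → j ≤ m →
      b * k j - a * Usum k m j ≤ y * (b * k j + a * Lsum k j) := by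
    intro j h1 h2
    have hkj := hkpos' j h1 h2
    have hLj := hLpos j h1 h2
    have hden : 0 < b * k j + a * Lsum k j := by
      have := mul_pos hb hkj
      have := mul_pos ha hLj
      linarith
    have hle := Finset.le_sup' (f := fun j =>
      (b * k j - a * Usum k m j) / (b * k j + a * Lsum k j))
      (Finset.mem_Icc.mpr ⟨h1, h2⟩)
    have hMle : (b * k j - a * Usum k m j) / (b * k j + a * Lsum k j) ≤ y :=
      le_trans hle hMy
    calc b * k j - a * Usum k m j
        = (b * k j - a * Usum k m j) / (b * k j + a * Lsum k j)
            * (b * k j + a * Lsum k j) := by field_simp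
      _ ≤ y * (b * k j + a * Lsum k j) :=
          mul_le_mul_of_nonneg_right hMle hden.le
  have hgle : ∀ ℓ : ℕ, 1 ≤ mgIdx m ℓ ∧ mgIdx m ℓ ≤ m := by
    intro ℓ
    refine ⟨Nat.le_add_right 1 _, ?_⟩
    have := Nat.mod_lt (ℓ - 1) hm0
    unfold mgIdx
    omega
  have hpge : ∀ ℓ : ℕ, 1 ≤ ℓ → 1 ≤ (m + ℓ - 1) / m := by
    intro ℓ hℓ
    rw [Nat.le_div_iff_mul_le hm0]
    omega
  have hxpow : ∀ P : ℕ, 1 ≤ P → x ^ P ∈ Set.Icc (0:ℝ) ε := by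
    intro P hP
    refine ⟨by positivity, ?_⟩
    calc x ^ P ≤ x ^ 1 := pow_le_pow_of_le_one hx0.le hxlt1.le hP
      _ = x := pow_one x
      _ ≤ ε := hx2
  have hconv : ∀ P : ℕ, (x ^ P) ^ r = y ^ P := by
    intro P
    rw [hydef, ← Real.rpow_natCast x P, ← Real.rpow_natCast (x ^ r) P,
      ← Real.rpow_mul hx0.le, ← Real.rpow_mul hx0.le, mul_comm]
  have hbound : ∀ ℓ, 1 ≤ ℓ →
      a * phiAux k m y ℓ ≤ mgTerm k f m ℓ x ∧ mgTerm k f m ℓ x ≤ b * phiAux k m y ℓ := by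
    intro ℓ hℓ
    have hg := hgle ℓ
    have hkg : 0 < k (mgIdx m ℓ) := hkpos' _ hg.1 hg.2
    have hP := hpge ℓ hℓ
    have hfx := hf (x ^ ((m + ℓ - 1)/m)) (hxpow _ hP)
    rw [hconv] at hfx
    unfold mgTerm phiAux
    constructor
    · calc a * (k (mgIdx m ℓ) * y ^ ((m + ℓ - 1)/m))
          = k (mgIdx m ℓ) * (a * y ^ ((m + ℓ - 1)/m)) := by ring
        _ ≤ k (mgIdx m ℓ) * f (x ^ ((m + ℓ - 1)/m)) :=
            mul_le_mul_of_nonneg_left hfx.1 hkg.le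
    · calc k (mgIdx m ℓ) * f (x ^ ((m + ℓ - 1)/m))
          ≤ k (mgIdx m ℓ) * (b * y ^ ((m + ℓ - 1)/m)) :=
            mul_le_mul_of_nonneg_left hfx.2 hkg.le
        _ = b * (k (mgIdx m ℓ) * y ^ ((m + ℓ - 1)/m)) := by ring
  have hphinn : ∀ ℓ : ℕ, 0 ≤ phiAux k m y ℓ := by
    intro ℓ
    have hg := hgle ℓ
    have hkg := hkpos' _ hg.1 hg.2
    unfold phiAux
    positivity
  have hwnn : ∀ ℓ, 1 ≤ ℓ → 0 ≤ mgTerm k f m ℓ x := by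
    intro ℓ hℓ
    exact le_trans (mul_nonneg ha.le (hphinn ℓ)) (hbound ℓ hℓ).1
  set z := y ^ ((1:ℝ)/m) with hzdef
  have hz0 : 0 < z := Real.rpow_pos_of_pos hy0 _
  have hz1 : z < 1 := Real.rpow_lt_one hy0.le hy1 (by positivity)
  have hzm : z ^ m = y := by
    rw [hzdef, ← Real.rpow_natCast (y ^ ((1:ℝ)/m)) m, ← Real.rpow_mul hy0.le,
      one_div, inv_mul_cancel₀ (by exact_mod_cast hm0.ne'), Real.rpow_one]
  have hphile : ∀ ℓ, 1 ≤ ℓ → phiAux k m y ℓ ≤ k 1 * z ^ ℓ := by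
    intro ℓ hℓ
    have hg := hgle ℓ
    have hk1 : k (mgIdx m ℓ) ≤ k 1 := hkmono 1 _ le_rfl hg.1 hg.2
    have hmul : ℓ ≤ m * ((m + ℓ - 1)/m) := by
      have h1 := Nat.div_add_mod (m + ℓ - 1) m
      have h2 := Nat.mod_lt (m + ℓ - 1) hm0
      generalize hQ : m * ((m + ℓ - 1)/m) = Q at h1 ⊢
      generalize hS : (m + ℓ - 1) % m = S at h1 h2
      omega
    have hyp : y ^ ((m + ℓ - 1)/m) ≤ z ^ ℓ := by
      calc y ^ ((m + ℓ - 1)/m) = (z ^ m) ^ ((m + ℓ - 1)/m) := by rw [hzm]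
        _ = z ^ (m * ((m + ℓ - 1)/m)) := by rw [← pow_mul]
        _ ≤ z ^ ℓ := pow_le_pow_of_le_one hz0.le hz1.le hmul
    unfold phiAux
    exact mul_le_mul hk1 hyp (by positivity) (hkpos' 1 le_rfl hm).le
  have hwsum : ∀ n : ℕ, Summable (fun j => mgTerm k f m (n + 1 + j) x) := by
    intro n
    refine Summable.of_nonneg_of_le (fun j => hwnn _ (by omega)) (fun j => ?_)
      (Summable.mul_left (b * k 1 * z ^ (n+1))
        (summable_geometric_of_lt_one hz0.le hz1))
    calc mgTerm k f m (n + 1 + j) x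
        ≤ b * phiAux k m y (n + 1 + j) := (hbound _ (by omega)).2
      _ ≤ b * (k 1 * z ^ (n + 1 + j)) :=
          mul_le_mul_of_nonneg_left (hphile _ (by omega)) hb.le
      _ = b * k 1 * z ^ (n+1) * z ^ j := by rw [pow_add]; ring
  have part1 : ∀ n : ℕ, 1 ≤ n →
      mgTerm k f m n x ≤ ∑' j : ℕ, mgTerm k f m (n + 1 + j) x := by
    intro n hn
    set gn := mgIdx m n with hgn
    set pn := (m + n - 1)/m with hpn
    have hgn1 : 1 ≤ gn := (hgle n).1
    have hgnm : gn ≤ m := (hgle n).2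
    have hpn1 : 1 ≤ pn := hpge n hn
    have hpneq : pn = (n - 1)/m + 1 := by
      rw [hpn, show m + n - 1 = (n - 1) + m by omega, Nat.add_div_right _ hm0]
    have hdecomp : n = (pn - 1) * m + gn := by
      have h1 : (n-1)/m * m + (n-1) % m = n - 1 := Nat.div_add_mod' (n-1) m
      have h2 : (pn - 1) * m = (n-1)/m * m := by rw [hpneq]; simp
      rw [h2, hgn]
      unfold mgIdx
      generalize hA : (n-1)/m * m = A at h1 ⊢
      generalize hB : (n-1) % m = B at h1 ⊢
      omega
    have hAsum : ∀ N : ℕ, ∑ ℓ ∈ Finset.Ioc n ((pn + N) * m), phiAux k m y ℓ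
        = Usum k m gn * y ^ pn
          + Ksum k m * ∑ s ∈ Finset.range N, y ^ (pn + 1 + s) := by
      intro N
      induction N with
      | zero =>
        simp only [Finset.range_zero, Finset.sum_empty, mul_zero, add_zero, Nat.add_zero]
        have hm2 : pn * m = (pn-1)*m + m := by
          rw [show (pn-1)*m + m = (pn-1+1)*m by ring, Nat.sub_add_cancel hpn1]
        have he : Finset.Ioc n (pn * m) = Finset.Ioc ((pn-1)*m + gn) ((pn-1)*m + m) := by
          rw [← hm2, ← hdecomp]
        rw [he, blocksum k m y hm0 (pn-1) gn hgnm, Nat.sub_add_cancel hpn1, Usum]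
      | succ N ih =>
        have hle1 : n ≤ (pn + N) * m := by
          calc n = (pn - 1) * m + gn := hdecomp
            _ ≤ (pn - 1) * m + m := by omega
            _ = (pn - 1 + 1) * m := by ring
            _ ≤ (pn + N) * m := Nat.mul_le_mul_right m (by omega)
        have hle2 : (pn + N) * m ≤ (pn + (N+1)) * m := Nat.mul_le_mul_right m (by omega)
        rw [← Finset.sum_Ioc_consecutive _ hle1 hle2, ih]
        have he : Finset.Ioc ((pn+N)*m) ((pn+(N+1))*m)
            = Finset.Ioc ((pn+N)*m + 0) ((pn+N)*m + m) := by
          rw [show (pn+N)*m + m = (pn+(N+1))*m by ring]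
          simp
        rw [he, blocksum k m y hm0 (pn+N) 0 (Nat.zero_le m),
          show (∑ i ∈ Finset.Icc (0+1) m, k i) = Ksum k m from by rw [Ksum],
          Finset.sum_range_succ]
        rw [show pn + N + 1 = pn + 1 + N from by omega]
        ring
    have hkey : ∀ N : ℕ, a * (Usum k m gn * y ^ pn
        + Ksum k m * ∑ s ∈ Finset.range N, y ^ (pn + 1 + s))
        ≤ ∑' j, mgTerm k f m (n + 1 + j) x := by
      intro N
      rw [← hAsum N, Finset.mul_sum]
      have hstep1 : ∑ ℓ ∈ Finset.Ioc n ((pn + N) * m), a * phiAux k m y ℓ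
          ≤ ∑ ℓ ∈ Finset.Ioc n ((pn + N) * m), mgTerm k f m ℓ x := by
        refine Finset.sum_le_sum fun ℓ hℓ => ?_
        rw [Finset.mem_Ioc] at hℓ
        exact (hbound ℓ (by omega)).1
      refine hstep1.trans ?_
      have he2 : ∑ ℓ ∈ Finset.Ioc n ((pn + N) * m), mgTerm k f m ℓ x
          = ∑ j ∈ Finset.range ((pn + N) * m + 1 - (n+1)), mgTerm k f m (n + 1 + j) x := by
        rw [show Finset.Ioc n ((pn + N)*m) = Finset.Ico (n+1) ((pn + N)*m + 1) by
          rw [Finset.Ico_add_one_right_eq_Icc, Finset.Icc_add_one_left_eq_Ioc], Finset.sum_Ico_eq_sum_range]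
      rw [he2]
      exact Summable.sum_le_tsum _ (fun j _ => hwnn _ (by omega)) (hwsum n)
    have hgeo : Filter.Tendsto (fun N => ∑ s ∈ Finset.range N, y ^ (pn + 1 + s))
        Filter.atTop (nhds (y ^ (pn+1) / (1 - y))) := by
      have h := hasSum_geometric_of_lt_one hy0.le hy1
      have h2 := h.mul_left (y ^ (pn+1))
      have h3 : HasSum (fun s => y ^ (pn + 1 + s)) (y ^ (pn+1) / (1-y)) := by
        simpa [pow_add, div_eq_mul_inv] using h2
      exact h3.tendsto_sum_nat
    have hTle : a * (Usum k m gn * y ^ pn + Ksum k m * (y ^ (pn+1) / (1 - y)))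
        ≤ ∑' j, mgTerm k f m (n + 1 + j) x := by
      exact le_of_tendsto
        (((hgeo.const_mul (Ksum k m)).const_add (Usum k m gn * y ^ pn)).const_mul a)
        (Filter.Eventually.of_forall hkey)
    have hwn : mgTerm k f m n x ≤ b * (k gn * y ^ pn) := (hbound n hn).2
    have hIoc : ∀ jj : ℕ, Finset.Ioc 0 jj = Finset.Icc 1 jj := fun jj =>
      Finset.ext fun i => by simp only [Finset.mem_Ioc, Finset.mem_Icc]; omega
    have h2Ioc : Finset.Ioc gn m = Finset.Icc (gn+1) m :=
      Finset.ext fun i => by simp only [Finset.mem_Ioc, Finset.mem_Icc]; omega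
    have hsum_split : Ksum k m = Lsum k gn + Usum k m gn := by
      rw [Ksum, Lsum, Usum, ← hIoc m, ← hIoc gn, ← h2Ioc,
        Finset.sum_Ioc_consecutive k (Nat.zero_le gn) hgnm]
    have hfinal : b * (k gn * y ^ pn)
        ≤ a * (Usum k m gn * y ^ pn + Ksum k m * (y ^ (pn+1) / (1 - y))) := by
      have hc : (0:ℝ) ≤ y ^ pn := by positivity
      have hD : (0:ℝ) < 1 - y := by linarith
      have h2 : b * k gn * (1 - y) ≤ a * Usum k m gn + a * Lsum k gn * y := by
        have := hyj gn hgn1 hgnm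
        nlinarith [this]
      rw [hsum_split, ← sub_nonneg]
      have expand : a * (Usum k m gn * y ^ pn
            + (Lsum k gn + Usum k m gn) * (y ^ (pn+1) / (1 - y)))
          - b * (k gn * y ^ pn)
          = ((a * Usum k m gn + a * Lsum k gn * y - b * k gn * (1 - y)) * y ^ pn)
              / (1 - y) := by
        rw [pow_succ]
        field_simp
        ring
      rw [expand]
      exact div_nonneg (mul_nonneg (by linarith) hc) hD.le
    calc mgTerm k f m n x ≤ b * (k gn * y ^ pn) := hwn
      _ ≤ a * (Usum k m gn * y ^ pn + Ksum k m * (y ^ (pn+1) / (1 - y))) := hfinal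
      _ ≤ ∑' j, mgTerm k f m (n + 1 + j) x := hTle
  refine ⟨part1, ?_⟩
  have hvsum : Summable (fun j => mgTerm k f m (j + 1) x) := by
    have h := hwsum 0
    have he : (fun j => mgTerm k f m (0 + 1 + j) x) = fun j => mgTerm k f m (j + 1) x := by
      funext j; congr 1; omega
    rwa [he] at h
  have htail : ∀ n : ℕ, mgTerm k f m (n + 1) x
      ≤ ∑' j, mgTerm k f m (n + 1 + j + 1) x := by
    intro n
    have h := part1 (n+1) (by omega)
    refine h.trans (le_of_eq (tsum_congr fun j => ?_))
    congr 1
    omega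
  refine ⟨0, ∑' nn : ℕ, mgTerm k f m (nn + 1) x,
    tsum_nonneg fun nn => hwnn _ (by omega), ?_⟩
  have hset := greedy_interval (fun j => mgTerm k f m (j + 1) x)
    (fun nn => hwnn _ (by omega)) hvsum htail
  rw [← hset]
  ext t
  simp only [subsums, Set.mem_setOf_eq]
  constructor
  · rintro ⟨c, hc⟩
    exact ⟨fun nn => c (nn + 1), hc⟩
  · rintro ⟨c, hc⟩
    refine ⟨fun nn => c (nn - 1), ?_⟩
    simpa using hc
end

section
/- With the notation above, d_I ≤ d_{IM} := (b/(a+b))^{1/r}; consequently, if (b/(a+b))^{1/r} ≤ ε then E(w_n(x)) is a compact interval for every x ∈ [(b/(a+b))^{1/r}, ε]. -/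
open Set Finset

private lemma kakeya_interval (w : ℕ → ℝ) (hw : ∀ n, 0 ≤ w n) (hsum : Summable w)
    (hk : ∀ n, w n ≤ ∑' i, w (n + 1 + i)) :
    {y : ℝ | ∃ c : ℕ → Bool, HasSum (fun n => if c n then w n else 0) y}
      = Set.Icc 0 (∑' n, w n) := by
  ext y
  constructor
  · rintro ⟨c, hc⟩
    constructor
    · exact hasSum_le (fun n => by by_cases h : c n <;> simp [h, hw n]) hasSum_zero hc
    · exact hasSum_le (fun n => by by_cases h : c n <;> simp [h, hw n]) hc hsum.hasSum
  · rintro ⟨hy0, hyS⟩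
    classical
    set T : ℕ → ℝ := fun n => ∑' i, w (i + n) with hT
    have hTsub : ∀ n, Summable fun i => w (i + n) := fun n => (summable_nat_add_iff n).2 hsum
    have hTrec : ∀ n, T n = w n + T (n + 1) := by
      intro n
      have h0 := Summable.sum_add_tsum_nat_add (f := fun i => w (i + n)) 1 (hTsub n)
      simp only [Finset.sum_range_one, Nat.zero_add] at h0
      rw [hT]
      simp only
      rw [← h0]
      congr 1
      apply tsum_congr; intro i; congr 1; omega
    have hk' : ∀ n, w n ≤ T (n + 1) := by
      intro n
      refine (hk n).trans_eq ?_
      apply tsum_congr; intro i; congr 1; omega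
    let s : ℕ → ℝ := fun n => Nat.rec 0 (fun n sn => if sn + w n ≤ y then sn + w n else sn) n
    have hs0 : s 0 = 0 := rfl
    have hsucc : ∀ n, s (n + 1) = if s n + w n ≤ y then s n + w n else s n := fun n => rfl
    set c : ℕ → Bool := fun n => decide (s n + w n ≤ y) with hcdef
    have hv : ∀ n, (if c n then w n else 0) = s (n + 1) - s n := by
      intro n
      by_cases h : s n + w n ≤ y <;> simp [hcdef, h, hsucc n] <;> ring
    have hinv : ∀ n, s n ≤ y ∧ y - T n ≤ s n := by
      intro n
      induction n with
      | zero =>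
        refine ⟨by rw [hs0]; exact hy0, ?_⟩
        have hT0 : T 0 = ∑' n, w n := by apply tsum_congr; intro i; congr 1
        rw [hs0, hT0]; linarith
      | succ n ih =>
        have hrec := hTrec n
        by_cases h : s n + w n ≤ y
        · rw [hsucc n, if_pos h]
          exact ⟨h, by linarith [ih.2]⟩
        · rw [hsucc n, if_neg h]
          push_neg at h
          exact ⟨ih.1, by linarith [hk' n]⟩
    have hTto : Filter.Tendsto T Filter.atTop (nhds 0) := tendsto_sum_nat_add w
    have hsy : Filter.Tendsto s Filter.atTop (nhds y) := by
      have h1 : Filter.Tendsto (fun n => y - T n) Filter.atTop (nhds y) := by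
        simpa using hTto.const_sub y
      exact tendsto_of_tendsto_of_tendsto_of_le_of_le h1 tendsto_const_nhds
        (fun n => (hinv n).2) (fun n => (hinv n).1)
    have hps : ∀ n, ∑ i ∈ Finset.range n, (if c i then w i else 0) = s n := by
      intro n
      induction n with
      | zero => simp [hs0]
      | succ n ih => rw [Finset.sum_range_succ, ih, hv n]; ring
    have hvsum : Summable fun n => if c n then w n else 0 :=
      Summable.of_nonneg_of_le (fun n => by by_cases h : c n <;> simp [h, hw n])
        (fun n => by by_cases h : c n <;> simp [h, hw n]) hsum
    have htt : Filter.Tendsto (fun n => ∑ i ∈ Finset.range n, (if c i then w i else 0))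
        Filter.atTop (nhds (∑' n, if c n then w n else 0)) := hvsum.hasSum.tendsto_sum_nat
    have heq : (∑' n, if c n then w n else 0) = y := by
      apply tendsto_nhds_unique _ hsy
      have : (fun n => ∑ i ∈ Finset.range n, (if c i then w i else 0)) = s := funext hps
      rwa [this] at htt
    exact ⟨c, heq ▸ hvsum.hasSum⟩


private lemma divmod_tsum (m : ℕ) (hm : 1 ≤ m) (c : ℕ → ℝ) (hc : ∀ s, s < m → 0 ≤ c s)
    (u : ℝ) (hu0 : 0 ≤ u) (hu1 : u < 1) :
    Summable (fun i : ℕ => c (i % m) * u ^ (i / m)) ∧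
    ∑' i : ℕ, c (i % m) * u ^ (i / m) = (∑ s ∈ Finset.range m, c s) * (1 - u)⁻¹ := by
  haveI : NeZero m := ⟨by omega⟩
  set F : ℕ × Fin m → ℝ := fun p => c p.2 * u ^ p.1 with hF
  have hcomp : ∀ i : ℕ, c (i % m) * u ^ (i / m) = F (Nat.divModEquiv m i) := by
    intro i
    simp [hF, Nat.divModEquiv]
  have hinner : ∀ q : ℕ, ∑' s : Fin m, F (q, s) = (∑ s ∈ Finset.range m, c s) * u ^ q := by
    intro q
    rw [tsum_fintype]
    rw [Finset.sum_mul]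
    rw [← Fin.sum_univ_eq_sum_range (fun s => c s * u ^ q) m]
  have hFsum : Summable F := by
    apply (summable_prod_of_nonneg ?_).2
    · constructor
      · intro q
        exact Summable.of_finite
      · apply Summable.congr (f := fun q : ℕ => (∑ s ∈ Finset.range m, c s) * u ^ q)
        · exact (summable_geometric_of_lt_one hu0 hu1).mul_left _
        · intro q; rw [hinner q]
      
    · intro p
      exact mul_nonneg (hc p.2 p.2.isLt) (pow_nonneg hu0 _)
  constructor
  · apply (Summable.congr (hFsum.comp_injective (Nat.divModEquiv m).injective))
    intro i
    rw [hcomp i]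
    rfl
  · have h1 : ∑' i : ℕ, c (i % m) * u ^ (i / m) = ∑' p : ℕ × Fin m, F p := by
      rw [tsum_congr hcomp]
      exact (Nat.divModEquiv m).tsum_eq F
    rw [h1, Summable.tsum_prod hFsum]
    have h2 : ∀ q : ℕ, ∑' s : Fin m, F (q, s) = (∑ s ∈ Finset.range m, c s) * u ^ q := hinner
    rw [tsum_congr h2, tsum_mul_left, tsum_geometric_of_lt_one hu0 hu1]


/-- `d_I ≤ d_{IM} = (b/(a+b))^{1/r}`; consequently if `d_{IM} ≤ ε` then the achievement set
is a compact interval for every `x ∈ [d_{IM}, ε]`. -/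
theorem stmt_11 (f : ℝ → ℝ) (a b r ε : ℝ) (ha : 0 < a) (hb : 0 < b) (hr : 0 < r)
    (hε : 0 < ε) (hε1 : ε < 1)
    (hmono : MonotoneOn f (Set.Icc 0 ε))
    (hf : ∀ x ∈ Set.Icc (0:ℝ) ε, a * x ^ r ≤ f x ∧ f x ≤ b * x ^ r)
    (m : ℕ) (hm : 1 ≤ m) (k : ℕ → ℝ)
    (hkmono : ∀ i j, 1 ≤ i → i ≤ j → j ≤ m → k j ≤ k i)
    (hkpos : 0 < k m)
    (dI dIM : ℝ)
    (hdI : dI = ((Finset.Icc 1 m).sup' (Finset.nonempty_Icc.mpr hm)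
        (fun j => (b * k j - a * Usum k m j) / (b * k j + a * Lsum k j))) ^ (1 / r))
    (hdIM : dIM = (b / (a + b)) ^ (1 / r)) :
    dI ≤ dIM ∧
    (dIM ≤ ε → ∀ x ∈ Set.Icc dIM ε,
      ∃ p q : ℝ, p ≤ q ∧ subsums (fun n => mgTerm k f m n x) = Set.Icc p q) := by
  have hab : (0:ℝ) < a + b := by linarith
  have hkpos' : ∀ j, 1 ≤ j → j ≤ m → 0 < k j := fun j h1 h2 =>
    lt_of_lt_of_le hkpos (hkmono j m h1 h2 le_rfl)
  have hLpos : ∀ j, 1 ≤ j → j ≤ m → 0 < Lsum k j := by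
    intro j h1 h2
    apply Finset.sum_pos
    · intro i hi
      simp only [Finset.mem_Icc] at hi
      exact hkpos' i hi.1 (le_trans hi.2 h2)
    · exact Finset.nonempty_Icc.mpr h1
  have hUnn : ∀ j, 0 ≤ Usum k m j := by
    intro j
    apply Finset.sum_nonneg
    intro i hi
    simp only [Finset.mem_Icc] at hi
    exact (hkpos' i (by omega) hi.2).le
  have hkL : ∀ j, 1 ≤ j → j ≤ m → k j ≤ Lsum k j := by
    intro j h1 h2
    apply Finset.single_le_sum (f := fun i => k i)
    · intro i hi
      simp only [Finset.mem_Icc] at hi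
      exact (hkpos' i hi.1 (le_trans hi.2 h2)).le
    · simp [Finset.mem_Icc]; omega
  have hkK : ∀ j, 1 ≤ j → j ≤ m → k j ≤ Ksum k m := by
    intro j h1 h2
    apply Finset.single_le_sum (f := fun i => k i)
    · intro i hi
      simp only [Finset.mem_Icc] at hi
      exact (hkpos' i hi.1 hi.2).le
    · simp [Finset.mem_Icc]; omega
  have hden : ∀ j, 1 ≤ j → j ≤ m → 0 < b * k j + a * Lsum k j := by
    intro j h1 h2
    have := hkpos' j h1 h2
    have := hLpos j h1 h2
    positivity
  -- the sup is ≤ b/(a+b)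
  have hsuple : ((Finset.Icc 1 m).sup' (Finset.nonempty_Icc.mpr hm)
      (fun j => (b * k j - a * Usum k m j) / (b * k j + a * Lsum k j))) ≤ b / (a + b) := by
    apply Finset.sup'_le
    intro j hj
    simp only [Finset.mem_Icc] at hj
    rw [div_le_div_iff₀ (hden j hj.1 hj.2) hab]
    nlinarith [hUnn j, hkL j hj.1 hj.2, mul_le_mul_of_nonneg_left (hkL j hj.1 hj.2)
      (mul_pos ha hb).le, mul_nonneg (mul_nonneg ha.le hab.le) (hUnn j)]
  -- the sup is nonneg
  have hsup0 : 0 ≤ ((Finset.Icc 1 m).sup' (Finset.nonempty_Icc.mpr hm)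
      (fun j => (b * k j - a * Usum k m j) / (b * k j + a * Lsum k j))) := by
    have hmem : m ∈ Finset.Icc 1 m := by simp [Finset.mem_Icc]; omega
    refine le_trans ?_ (Finset.le_sup' (f := fun j =>
      (b * k j - a * Usum k m j) / (b * k j + a * Lsum k j)) hmem)
    have hU : Usum k m m = 0 := by
      rw [Usum, Finset.Icc_eq_empty (by omega)]; simp
    rw [hU]
    have h1 : b * k m - a * 0 = b * k m := by ring
    rw [h1]
    have := hkpos
    have := hden m hm le_rfl
    positivity
  constructor
  · rw [hdI, hdIM]
    exact Real.rpow_le_rpow hsup0 (le_trans hsuple (by rfl)) (by positivity)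
  · intro hdε x hx
    obtain ⟨hx1, hx2⟩ := hx
    have hdIMpos : 0 < dIM := by
      rw [hdIM]
      exact Real.rpow_pos_of_pos (by positivity) _
    have hx0 : 0 < x := lt_of_lt_of_le hdIMpos hx1
    have hxlt1 : x < 1 := lt_of_le_of_lt hx2 hε1
    set u : ℝ := x ^ r with hu
    have hu0 : 0 < u := Real.rpow_pos_of_pos hx0 r
    have hu1 : u < 1 := Real.rpow_lt_one hx0.le hxlt1 hr
    have h1u : (0:ℝ) < 1 - u := by linarith
    have hub : b / (a + b) ≤ u := by
      have h1 : dIM ^ r ≤ x ^ r := Real.rpow_le_rpow hdIMpos.le hx1 hr.le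
      have h2 : dIM ^ r = b / (a + b) := by
        rw [hdIM, ← Real.rpow_mul (by positivity), one_div, inv_mul_cancel₀ hr.ne',
          Real.rpow_one]
      rwa [h2] at h1
    -- bounds on f at powers of x
    have hfb : ∀ t : ℕ, 1 ≤ t → a * u ^ t ≤ f (x ^ t) ∧ f (x ^ t) ≤ b * u ^ t := by
      intro t ht
      have hxt : x ^ t ∈ Set.Icc (0:ℝ) ε := by
        constructor
        · positivity
        · calc x ^ t ≤ x ^ 1 := pow_le_pow_of_le_one hx0.le hxlt1.le ht
            _ = x := pow_one x
            _ ≤ ε := hx2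
      have hfx := hf _ hxt
      have hpow : (x ^ t) ^ r = u ^ t := by
        rw [← Real.rpow_natCast x t, ← Real.rpow_natCast u t, hu,
          ← Real.rpow_mul hx0.le, ← Real.rpow_mul hx0.le, mul_comm]
      rw [hpow] at hfx
      exact hfx
    -- the shifted series
    set W : ℕ → ℝ := fun n => mgTerm k f m (n + 1) x with hWdef
    have hWeq : ∀ n : ℕ, W n = k (1 + n % m) * f (x ^ (n / m + 1)) := by
      intro n
      have h1 : m + (n + 1) - 1 = m + n := by omega
      have h2 : (m + n) / m = n / m + 1 := by
        rw [add_comm]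
        exact Nat.add_div_right n (by omega)
      simp only [hWdef, mgTerm, mgIdx, h1, h2, Nat.add_sub_cancel]
    have hjmem : ∀ n : ℕ, 1 ≤ 1 + n % m ∧ 1 + n % m ≤ m := by
      intro n
      have := Nat.mod_lt n (show 0 < m by omega)
      omega
    have hW0 : ∀ n, 0 ≤ W n := by
      intro n
      rw [hWeq n]
      have hj := hjmem n
      have hfb' := hfb (n / m + 1) (Nat.le_add_left 1 _)
      have : (0:ℝ) ≤ f (x ^ (n / m + 1)) :=
        le_trans (by positivity) hfb'.1
      exact mul_nonneg (hkpos' _ hj.1 hj.2).le this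
    -- geometric domination for summability
    set ρ : ℝ := u ^ ((m:ℝ))⁻¹ with hρ
    have hρ0 : 0 ≤ ρ := (Real.rpow_pos_of_pos hu0 _).le
    have hρ1 : ρ < 1 := Real.rpow_lt_one hu0.le hu1 (by positivity)
    have hexp : ∀ n : ℕ, u ^ (n / m + 1) ≤ ρ ^ n := by
      intro n
      have hdm : (n:ℝ) / (m:ℝ) ≤ ((n / m + 1 : ℕ) : ℝ) := by
        rw [div_le_iff₀ (by positivity)]
        have h2 : n < m * (n / m + 1) := Nat.lt_mul_div_succ n (by omega)
        have h2' : (n:ℝ) < (m:ℝ) * ((n / m : ℕ) + 1) := by exact_mod_cast h2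
        push_cast
        nlinarith [h2']
      calc u ^ (n / m + 1) = u ^ (((n / m + 1 : ℕ)):ℝ) := (Real.rpow_natCast u _).symm
        _ ≤ u ^ ((n:ℝ) / m) := Real.rpow_le_rpow_of_exponent_ge hu0 hu1.le hdm
        _ = ρ ^ n := by
            rw [← Real.rpow_natCast ρ n, hρ, ← Real.rpow_mul hu0.le]
            congr 1
            field_simp
    have hWle : ∀ n, W n ≤ b * k 1 * ρ ^ n := by
      intro n
      rw [hWeq n]
      have hj := hjmem n
      have hfb' := hfb (n / m + 1) (Nat.le_add_left 1 _)
      have hf0 : (0:ℝ) ≤ f (x ^ (n / m + 1)) := le_trans (by positivity) hfb'.1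
      have hk1 : 0 < k 1 := hkpos' 1 le_rfl hm
      calc k (1 + n % m) * f (x ^ (n / m + 1))
          ≤ k 1 * (b * u ^ (n / m + 1)) :=
            mul_le_mul (hkmono 1 _ le_rfl hj.1 hj.2) hfb'.2 hf0 hk1.le
        _ ≤ k 1 * (b * ρ ^ n) := by
            apply mul_le_mul_of_nonneg_left _ hk1.le
            exact mul_le_mul_of_nonneg_left (hexp n) hb.le
        _ = b * k 1 * ρ ^ n := by ring
    have hWsum : Summable W :=
      Summable.of_nonneg_of_le hW0 hWle
        ((summable_geometric_of_lt_one hρ0 hρ1).mul_left _)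
    -- lower-bound series via divmod
    obtain ⟨hSsum, hSval⟩ := divmod_tsum m hm (fun s => k (1 + s))
      (fun s hs => (hkpos' (1 + s) (by omega) (by omega)).le) u hu0.le hu1
    have hKeq : ∑ s ∈ Finset.range m, k (1 + s) = Ksum k m := by
      rw [Ksum, ← Finset.Ico_add_one_right_eq_Icc, Finset.sum_Ico_eq_sum_range]
      simp
    rw [hKeq] at hSval
    -- the Kakeya condition
    have hWk : ∀ n, W n ≤ ∑' i, W (n + 1 + i) := by
      intro n
      set t : ℕ := n / m + 1 with htdef
      set j : ℕ := 1 + n % m with hjdef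
      have hj := hjmem n
      set d : ℕ := m - 1 - n % m with hddef
      have hnd : n + 1 + d = m * t := by
        have h1 : m * t = m * (n / m) + m := by rw [htdef]; ring
        rw [h1, hddef]
        have hA := Nat.div_add_mod n m
        have hmlt := Nat.mod_lt n (show 0 < m by omega)
        generalize m * (n / m) = A at hA ⊢
        generalize n % m = s at hA hmlt ⊢
        omega
      have hshift : Summable fun i => W (n + 1 + i) := by
        apply Summable.congr ((summable_nat_add_iff (n + 1)).2 hWsum)
        intro i
        congr 1
        omega
      have hsplit := Summable.sum_add_tsum_nat_add (f := fun i => W (n + 1 + i)) d hshift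
      have hfin : 0 ≤ ∑ i ∈ Finset.range d, W (n + 1 + i) :=
        Finset.sum_nonneg fun i _ => hW0 _
      have hrest : ∑' i, W (n + 1 + (i + d)) = ∑' i, W (m * t + i) := by
        apply tsum_congr
        intro i
        congr 1
        omega
      have htail1 : ∑' i, W (m * t + i) ≤ ∑' i, W (n + 1 + i) := by
        rw [← hsplit, ← hrest]
        linarith [le_refl (∑' i, W (n + 1 + (i + d)))]
      -- lower bound for ∑' i, W (m * t + i)
      have hWmt : ∀ i : ℕ, (a * u ^ (t + 1)) * ((fun s => k (1 + s)) (i % m) * u ^ (i / m))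
          ≤ W (m * t + i) := by
        intro i
        have hmod : (m * t + i) % m = i % m := Nat.mul_add_mod m t i
        have hdiv : (m * t + i) / m + 1 = t + 1 + i / m := by
          rw [add_comm (m * t) i, Nat.add_mul_div_left i t (show 0 < m by omega)]
          ring
        rw [hWeq (m * t + i), hmod, hdiv]
        have hfb' := hfb (t + 1 + i / m) (le_trans (Nat.le_add_left 1 t) (Nat.le_add_right (t + 1) (i / m)))
        have hkim : 0 < k (1 + i % m) := by
          have := Nat.mod_lt i (show 0 < m by omega)
          exact hkpos' _ (by omega) (by omega)
        calc (a * u ^ (t + 1)) * (k (1 + i % m) * u ^ (i / m))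
            = k (1 + i % m) * (a * u ^ (t + 1 + i / m)) := by rw [pow_add]; ring
          _ ≤ k (1 + i % m) * f (x ^ (t + 1 + i / m)) :=
              mul_le_mul_of_nonneg_left hfb'.1 hkim.le
      have hshift2 : Summable fun i => W (m * t + i) := by
        apply Summable.congr ((summable_nat_add_iff (m * t)).2 hWsum)
        intro i
        congr 1
        omega
      have htail2 : (a * u ^ (t + 1)) * (Ksum k m * (1 - u)⁻¹) ≤ ∑' i, W (m * t + i) := by
        have h := Summable.tsum_le_tsum hWmt (hSsum.mul_left _) hshift2
        rwa [tsum_mul_left, hSval] at h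
      -- upper bound on W n
      have hWn : W n ≤ b * k j * u ^ t := by
        rw [hWeq n, ← hjdef, ← htdef]
        have hfb' := hfb t (by rw [htdef]; exact Nat.le_add_left 1 _)
        calc k j * f (x ^ t) ≤ k j * (b * u ^ t) :=
              mul_le_mul_of_nonneg_left hfb'.2 (hkpos' j hj.1 hj.2).le
          _ = b * k j * u ^ t := by ring
      -- key numeric inequality
      have hkey : b * k j * (1 - u) ≤ a * u * Ksum k m := by
        have h1 : b ≤ (a + b) * u := by
          rw [div_le_iff₀ hab] at hub
          linarith [hub]
        have h2 : k j ≤ Ksum k m := hkK j hj.1 hj.2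
        have h3 : 0 < k j := hkpos' j hj.1 hj.2
        nlinarith [mul_le_mul_of_nonneg_right h1 h3.le,
          mul_le_mul_of_nonneg_left h2 (mul_pos ha hu0).le]
      have hmid : b * k j * u ^ t ≤ (a * u ^ (t + 1)) * (Ksum k m * (1 - u)⁻¹) := by
        have hh := mul_le_mul_of_nonneg_right (mul_le_mul_of_nonneg_right hkey
          (pow_nonneg hu0.le t)) (inv_nonneg.mpr h1u.le)
        have h2 : b * k j * (1 - u) * u ^ t * (1 - u)⁻¹ = b * k j * u ^ t := by
          rw [show b * k j * (1 - u) * u ^ t * (1 - u)⁻¹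
              = b * k j * u ^ t * ((1 - u) * (1 - u)⁻¹) by ring,
            mul_inv_cancel₀ h1u.ne', mul_one]
        have h3 : a * u * Ksum k m * u ^ t * (1 - u)⁻¹
            = (a * u ^ (t + 1)) * (Ksum k m * (1 - u)⁻¹) := by
          rw [pow_succ]; ring
        rw [h2, h3] at hh
        exact hh
      linarith [htail1, htail2, hmid, hWn]
    -- conclude
    refine ⟨0, ∑' n, W n, tsum_nonneg hW0, ?_⟩
    have hset : subsums (fun n => mgTerm k f m n x)
        = {y : ℝ | ∃ c : ℕ → Bool, HasSum (fun n => if c n then W n else 0) y} := by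
      ext y
      constructor
      · rintro ⟨c, hc⟩
        exact ⟨fun n => c (n + 1), hc⟩
      · rintro ⟨c, hc⟩
        refine ⟨fun n => c (n - 1), ?_⟩
        simpa using hc
    rw [hset, kakeya_interval W hW0 hWsum hWk]
end

section
/- Let f be monotone increasing on [0,ε] with a·x^r ≤ f(x) ≤ b·x^r on [0,ε], and let k₁ ≥ ... ≥ k_m > 0 with K = ∑ k_i. Set d_{NI} = (a·k_m/(b·K + a·k_m))^{1/r}. Then for every x with 0 < x < min{ε, d_{NI}} and every ℓ ≥ 1, w_{ℓm}(x) > ∑_{j>ℓm} w_j(x); consequently E(w_n(x)) is not a finite union of closed bounded intervals. -/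
open Set Finset

lemma sum_Icc_one_eq (k : ℕ → ℝ) : ∀ m : ℕ,
    ∑ i ∈ Finset.Icc 1 m, k i = ∑ s ∈ Finset.range m, k (s + 1)
  | 0 => by simp
  | (m + 1) => by
      rw [Finset.sum_Icc_succ_top (by omega), Finset.sum_range_succ, sum_Icc_one_eq k m]

set_option maxHeartbeats 1000000 in
/-- For `0 < x < min{ε, d_{NI}}`, each term `w_{ℓm}(x)` strictly exceeds its tail; hence
the achievement set is not a finite union of closed bounded intervals. -/
theorem stmt_13 (f : ℝ → ℝ) (a b r ε : ℝ) (ha : 0 < a) (hb : 0 < b) (hr : 0 < r)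
    (hε : 0 < ε) (hε1 : ε < 1)
    (hmono : MonotoneOn f (Set.Icc 0 ε))
    (hf : ∀ x ∈ Set.Icc (0:ℝ) ε, a * x ^ r ≤ f x ∧ f x ≤ b * x ^ r)
    (m : ℕ) (hm : 1 ≤ m) (k : ℕ → ℝ)
    (hkmono : ∀ i j, 1 ≤ i → i ≤ j → j ≤ m → k j ≤ k i)
    (hkpos : 0 < k m)
    (dNI : ℝ)
    (hdNI : dNI = (a * k m / (b * Ksum k m + a * k m)) ^ (1 / r)) :
    ∀ x : ℝ, 0 < x → x < min ε dNI →
      (∀ ℓ : ℕ, 1 ≤ ℓ →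
        (∑' j : ℕ, mgTerm k f m (ℓ * m + 1 + j) x) < mgTerm k f m (ℓ * m) x) ∧
      ¬ ∃ S : Finset (ℝ × ℝ), (∀ p ∈ S, p.1 ≤ p.2) ∧
          subsums (fun n => mgTerm k f m n x) = ⋃ p ∈ S, Set.Icc p.1 p.2 := by
  intro x hx hxm
  have hxε : x < ε := (lt_min_iff.mp hxm).1
  have hxd : x < dNI := (lt_min_iff.mp hxm).2
  have hx1 : x < 1 := hxε.trans hε1
  haveI : NeZero m := ⟨by omega⟩
  set w : ℕ → ℝ := fun n => mgTerm k f m n x with hw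
  set K := Ksum k m with hK
  have hkm_le : ∀ s, 1 ≤ s → s ≤ m → k m ≤ k s := fun s h1 h2 => hkmono s m h1 h2 le_rfl
  have hkpos' : ∀ s, 1 ≤ s → s ≤ m → 0 < k s := fun s h1 h2 =>
    lt_of_lt_of_le hkpos (hkm_le s h1 h2)
  have hKpos : 0 < K := Finset.sum_pos
    (fun i hi => hkpos' i (Finset.mem_Icc.mp hi).1 (Finset.mem_Icc.mp hi).2)
    ⟨1, Finset.mem_Icc.mpr ⟨le_rfl, hm⟩⟩
  set y := x ^ r with hy
  have hy0 : 0 < y := Real.rpow_pos_of_pos hx r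
  set c := a * k m / (b * K + a * k m) with hc
  have hden : 0 < b * K + a * k m := add_pos (mul_pos hb hKpos) (mul_pos ha hkpos)
  have hc0 : 0 < c := div_pos (mul_pos ha hkpos) hden
  have hc1 : c < 1 := (div_lt_one hden).mpr (by nlinarith [mul_pos hb hKpos])
  have hyc : y < c := by
    have h1 : x ^ r < dNI ^ r := Real.rpow_lt_rpow hx.le hxd hr
    rw [hdNI, ← Real.rpow_mul hc0.le, one_div_mul_cancel hr.ne', Real.rpow_one] at h1
    exact h1
  have hy1 : y < 1 := hyc.trans hc1
  have h1y : 0 < 1 - y := by linarith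
  -- power facts
  have hxe_mem : ∀ e : ℕ, 1 ≤ e → x ^ e ∈ Set.Icc (0:ℝ) ε := by
    intro e he
    refine ⟨(pow_pos hx e).le, le_trans ?_ hxε.le⟩
    have := pow_le_pow_of_le_one hx.le hx1.le he
    simpa using this
  have hpow_rpow : ∀ e : ℕ, (x ^ e) ^ r = y ^ e := by
    intro e
    rw [← Real.rpow_natCast x e, ← Real.rpow_natCast y e, hy,
      ← Real.rpow_mul hx.le, ← Real.rpow_mul hx.le, mul_comm]
  have hfl : ∀ e : ℕ, 1 ≤ e → a * y ^ e ≤ f (x ^ e) := by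
    intro e he
    have h1 := (hf _ (hxe_mem e he)).1
    rwa [hpow_rpow e] at h1
  have hfu : ∀ e : ℕ, 1 ≤ e → f (x ^ e) ≤ b * y ^ e := by
    intro e he
    have h1 := (hf _ (hxe_mem e he)).2
    rwa [hpow_rpow e] at h1
  have hfpos : ∀ e : ℕ, 1 ≤ e → 0 < f (x ^ e) := fun e he =>
    lt_of_lt_of_le (mul_pos ha (pow_pos hy0 e)) (hfl e he)
  -- evaluation of terms
  have hweval : ∀ q s : ℕ, s < m → w (q * m + s + 1) = k (s + 1) * f (x ^ (q + 1)) := by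
    intro q s hs
    have hidx : mgIdx m (q * m + s + 1) = s + 1 := by
      unfold mgIdx
      have h1 : q * m + s + 1 - 1 = s + q * m := by omega
      rw [h1, Nat.add_mul_mod_self_right, Nat.mod_eq_of_lt hs]
      omega
    have hexp : (m + (q * m + s + 1) - 1) / m = q + 1 := by
      have h2 : (q + 1) * m = q * m + m := by ring
      have h1 : m + (q * m + s + 1) - 1 = s + (q + 1) * m := by omega
      rw [h1, Nat.add_mul_div_right _ _ (by omega : 0 < m), Nat.div_eq_of_lt hs, zero_add]
    show mgTerm k f m (q * m + s + 1) x = _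
    rw [mgTerm, hidx, hexp]
  have hA : ∀ ℓ : ℕ, 1 ≤ ℓ → w (ℓ * m) = k m * f (x ^ ℓ) := by
    intro ℓ hℓ
    have hml : ℓ * m = (ℓ - 1) * m + (m - 1) + 1 := by
      have h2 : (ℓ - 1) * m + m = ℓ * m := by
        have h3 : (ℓ - 1 + 1) * m = (ℓ - 1) * m + m := by ring
        have h4 : ℓ - 1 + 1 = ℓ := by omega
        rw [← h3, h4]
      omega
    rw [hml, hweval _ _ (by omega)]
    have h5 : m - 1 + 1 = m := by omega
    have h6 : ℓ - 1 + 1 = ℓ := by omega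
    rw [h5, h6]
  have htail_eval : ∀ ℓ j : ℕ, w (ℓ * m + 1 + j) = k (j % m + 1) * f (x ^ (ℓ + j / m + 1)) := by
    intro ℓ j
    have hdm := Nat.div_add_mod j m
    have h2 : (ℓ + j / m) * m = ℓ * m + (j / m) * m := by ring
    have h3 : m * (j / m) = (j / m) * m := by ring
    have h1 : ℓ * m + 1 + j = (ℓ + j / m) * m + j % m + 1 := by omega
    rw [h1, hweval _ _ (Nat.mod_lt _ (by omega))]
  have hmodlt : ∀ j : ℕ, j % m < m := fun j => Nat.mod_lt _ (by omega)
  have hwpos : ∀ ℓ j : ℕ, 0 < w (ℓ * m + 1 + j) := by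
    intro ℓ j
    rw [htail_eval]
    exact mul_pos (hkpos' _ (by omega) (by have := hmodlt j; omega)) (hfpos _ (Nat.le_add_left 1 _))
  have hwpos' : ∀ n : ℕ, 0 < w (n + 1) := by
    intro n
    have h1 := hwpos 0 n
    have h2 : 0 * m + 1 + n = n + 1 := by omega
    rwa [h2] at h1
  -- the sum over a block of coefficients
  have hKfin : ∀ t : ℝ, (∑ s : Fin m, k ((s : ℕ) + 1) * t) = K * t := by
    intro t
    rw [← Finset.sum_mul]
    congr 1
    rw [hK, Ksum, sum_Icc_one_eq, ← Fin.sum_univ_eq_sum_range (fun s => k (s + 1)) m]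
  -- tail summability and bound
  have htail_core : ∀ ℓ : ℕ, Summable (fun j : ℕ => w (ℓ * m + 1 + j)) ∧
      (∑' j : ℕ, w (ℓ * m + 1 + j)) ≤ K * b * (y ^ (ℓ + 1) * (1 - y)⁻¹) := by
    intro ℓ
    set v : ℕ → ℝ := fun j => k (j % m + 1) * (b * y ^ (ℓ + j / m + 1)) with hv
    have hle : ∀ j, w (ℓ * m + 1 + j) ≤ v j := by
      intro j
      rw [htail_eval]
      exact mul_le_mul_of_nonneg_left (hfu _ (Nat.le_add_left 1 _))
        (hkpos' _ (by omega) (by have := hmodlt j; omega)).le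
    have hgd : Summable (fun p : ℕ => b * y ^ (ℓ + p + 1)) := by
      have h1 : (fun p : ℕ => b * y ^ (ℓ + p + 1)) = fun p => (b * y ^ (ℓ + 1)) * y ^ p := by
        funext p
        have h2 : ℓ + p + 1 = (ℓ + 1) + p := by omega
        rw [h2, pow_add]; ring
      rw [h1]
      exact (summable_geometric_of_lt_one hy0.le hy1).mul_left _
    have hgd0 : 0 ≤ fun p : ℕ => b * y ^ (ℓ + p + 1) := fun p => by positivity
    have hcFin : Summable (fun s : Fin m => k ((s : ℕ) + 1)) := Summable.of_finite
    have hcFin0 : 0 ≤ fun s : Fin m => k ((s : ℕ) + 1) := fun s =>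
      (hkpos' _ (by omega) (by have := s.isLt; omega)).le
    have hsum_g : Summable (fun q : ℕ × Fin m => (b * y ^ (ℓ + q.1 + 1)) * k ((q.2 : ℕ) + 1)) :=
      Summable.mul_of_nonneg hgd hcFin hgd0 hcFin0
    have hsum_g' : Summable (fun q : ℕ × Fin m => k ((q.2 : ℕ) + 1) * (b * y ^ (ℓ + q.1 + 1))) := by
      have h1 : (fun q : ℕ × Fin m => k ((q.2 : ℕ) + 1) * (b * y ^ (ℓ + q.1 + 1)))
          = fun q : ℕ × Fin m => (b * y ^ (ℓ + q.1 + 1)) * k ((q.2 : ℕ) + 1) := by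
        funext q; ring
      rw [h1]; exact hsum_g
    have hcomp : (fun q : ℕ × Fin m => v ((Nat.divModEquiv m).symm q))
        = fun q : ℕ × Fin m => k ((q.2 : ℕ) + 1) * (b * y ^ (ℓ + q.1 + 1)) := by
      funext q
      obtain ⟨p, s⟩ := q
      have hps : (Nat.divModEquiv m).symm (p, s) = p * m + (s : ℕ) := rfl
      have h1 : (p * m + (s : ℕ)) % m = (s : ℕ) := by
        rw [add_comm, Nat.add_mul_mod_self_right, Nat.mod_eq_of_lt s.isLt]
      have h2 : (p * m + (s : ℕ)) / m = p := by
        rw [add_comm, Nat.add_mul_div_right _ _ (by omega : 0 < m),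
          Nat.div_eq_of_lt s.isLt, zero_add]
      show v (p * m + (s : ℕ)) = _
      rw [hv]
      simp only [h1, h2]
    have hvs : Summable v := by
      rw [← Equiv.summable_iff (Nat.divModEquiv m).symm]
      show Summable (fun q : ℕ × Fin m => v ((Nat.divModEquiv m).symm q))
      rw [hcomp]
      exact hsum_g'
    have hws : Summable (fun j : ℕ => w (ℓ * m + 1 + j)) :=
      Summable.of_nonneg_of_le (fun j => (hwpos ℓ j).le) hle hvs
    refine ⟨hws, le_trans (Summable.tsum_le_tsum hle hws hvs) (le_of_eq ?_)⟩
    rw [← Equiv.tsum_eq (Nat.divModEquiv m).symm v]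
    show (∑' q : ℕ × Fin m, v ((Nat.divModEquiv m).symm q)) = _
    rw [hcomp, Summable.tsum_prod' hsum_g' (fun p => Summable.of_finite)]
    have h4 : ∀ p : ℕ, (∑' s : Fin m, k ((s : ℕ) + 1) * (b * y ^ (ℓ + p + 1)))
        = K * (b * y ^ (ℓ + p + 1)) := by
      intro p
      rw [tsum_fintype]
      exact hKfin _
    simp only [h4]
    have h5 : (fun p : ℕ => K * (b * y ^ (ℓ + p + 1)))
        = fun p : ℕ => (K * (b * y ^ (ℓ + 1))) * y ^ p := by
      funext p
      have h6 : ℓ + p + 1 = (ℓ + 1) + p := by omega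
      rw [h6, pow_add]; ring
    rw [h5, tsum_mul_left, tsum_geometric_of_lt_one hy0.le hy1]
    ring
  -- Part 1
  have hpart1 : ∀ ℓ : ℕ, 1 ≤ ℓ → (∑' j : ℕ, w (ℓ * m + 1 + j)) < w (ℓ * m) := by
    intro ℓ hℓ
    have h1 := (htail_core ℓ).2
    have hz : (0:ℝ) < (1 - y)⁻¹ := inv_pos.mpr h1y
    have hyl : (0:ℝ) < y ^ ℓ := pow_pos hy0 ℓ
    have hkey : y * (b * K + a * k m) < a * k m := (lt_div_iff₀ hden).mp hyc
    have h2 : K * b * (y ^ (ℓ + 1) * (1 - y)⁻¹) < k m * (a * y ^ ℓ) := by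
      have h4 : b * K * y < a * k m * (1 - y) := by nlinarith
      have h5 : (b * K * y) * (y ^ ℓ * (1 - y)⁻¹) < (a * k m * (1 - y)) * (y ^ ℓ * (1 - y)⁻¹) :=
        mul_lt_mul_of_pos_right h4 (mul_pos hyl hz)
      have h6 : (a * k m * (1 - y)) * (y ^ ℓ * (1 - y)⁻¹) = k m * (a * y ^ ℓ) := by
        field_simp
      have h7 : K * b * (y ^ (ℓ + 1) * (1 - y)⁻¹) = (b * K * y) * (y ^ ℓ * (1 - y)⁻¹) := by
        rw [pow_succ]; ring
      rw [h7, ← h6]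
      exact h5
    have h8 : k m * (a * y ^ ℓ) ≤ w (ℓ * m) := by
      rw [hA ℓ hℓ]
      exact mul_le_mul_of_nonneg_left (hfl ℓ hℓ) hkpos.le
    exact lt_of_le_of_lt h1 (lt_of_lt_of_le h2 h8)
  -- HasSum for the tail selection
  have hG : ∀ ℓ : ℕ, HasSum (fun n : ℕ => if ℓ * m ≤ n then w (n + 1) else 0)
      (∑' j : ℕ, w (ℓ * m + 1 + j)) := by
    intro ℓ
    have h1 : HasSum (fun j : ℕ => w (ℓ * m + 1 + j)) (∑' j : ℕ, w (ℓ * m + 1 + j)) :=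
      (htail_core ℓ).1.hasSum
    have h2 : (fun j : ℕ => (fun n : ℕ => if ℓ * m ≤ n then w (n + 1) else 0) (j + ℓ * m))
        = fun j => w (ℓ * m + 1 + j) := by
      funext j
      simp only
      rw [if_pos (by omega)]
      congr 1
      omega
    have h3 := (hasSum_nat_add_iff
      (f := fun n : ℕ => if ℓ * m ≤ n then w (n + 1) else 0) (ℓ * m)).mp (by rw [h2]; exact h1)
    have h4 : ∑ i ∈ Finset.range (ℓ * m), (if ℓ * m ≤ i then w (i + 1) else 0) = 0 :=
      Finset.sum_eq_zero fun i hi => if_neg (by simp only [Finset.mem_range] at hi; omega)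
    rwa [h4, add_zero] at h3
  -- HasSum for the single term selection
  have hAhs : ∀ ℓ : ℕ, 1 ≤ ℓ →
      HasSum (fun n : ℕ => if n + 1 = ℓ * m then w (n + 1) else 0) (w (ℓ * m)) := by
    intro ℓ hℓ
    have hml : 1 ≤ ℓ * m := Nat.mul_le_mul hℓ hm
    have h1 : (fun n : ℕ => if n + 1 = ℓ * m then w (n + 1) else 0)
        = fun n => if n = ℓ * m - 1 then w (ℓ * m) else 0 := by
      funext n
      by_cases h : n + 1 = ℓ * m
      · rw [if_pos h, if_pos (by omega), h]
      · rw [if_neg h, if_neg (by omega)]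
    rw [h1]
    exact hasSum_ite_eq _ _
  have hAmem : ∀ ℓ : ℕ, 1 ≤ ℓ → w (ℓ * m) ∈ subsums w := by
    intro ℓ hℓ
    exact ⟨fun n => decide (n = ℓ * m), by simpa using hAhs ℓ hℓ⟩
  -- the gap
  have hgap : ∀ t ∈ subsums w, ∀ ℓ : ℕ, 1 ≤ ℓ →
      t ≤ (∑' j : ℕ, w (ℓ * m + 1 + j)) ∨ w (ℓ * m) ≤ t := by
    intro t ht ℓ hℓ
    obtain ⟨c, hcsum⟩ := ht
    by_cases hcase : ∃ n : ℕ, n + 1 ≤ ℓ * m ∧ c (n + 1) = true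
    · right
      obtain ⟨n, hn, hcn⟩ := hcase
      have hterm : w (ℓ * m) ≤ w (n + 1) := by
        have hdm := Nat.div_add_mod n m
        have hs : n % m < m := hmodlt n
        have heq : n + 1 = (n / m) * m + n % m + 1 := by
          have h3 : m * (n / m) = (n / m) * m := by ring
          omega
        rw [heq, hweval _ _ hs, hA ℓ hℓ]
        have hq : n / m + 1 ≤ ℓ := by
          by_contra hcon
          push_neg at hcon
          have h5 : ℓ * m ≤ (n / m) * m := Nat.mul_le_mul_right m (by omega)
          have h3 : m * (n / m) = (n / m) * m := by ring
          omega
        have hxle : x ^ ℓ ≤ x ^ (n / m + 1) := pow_le_pow_of_le_one hx.le hx1.le hq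
        have hfle : f (x ^ ℓ) ≤ f (x ^ (n / m + 1)) :=
          hmono (hxe_mem ℓ hℓ) (hxe_mem _ (Nat.le_add_left 1 _)) hxle
        have hkle : k m ≤ k (n % m + 1) := hkm_le _ (by omega) (by omega)
        exact mul_le_mul hkle hfle (hfpos ℓ hℓ).le (hkpos' _ (by omega) (by omega)).le
      have h6 := le_hasSum hcsum n (fun j _ => by
        by_cases h : c (j + 1) = true <;> simp [h, (hwpos' j).le])
      rw [if_pos hcn] at h6
      exact le_trans hterm h6
    · left
      push_neg at hcase
      refine hasSum_le ?_ hcsum (hG ℓ)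
      intro n
      by_cases h : ℓ * m ≤ n
      · by_cases h2 : c (n + 1) = true <;> simp [h, h2, (hwpos' n).le]
      · have hfalse : ¬(c (n + 1) = true) := hcase n (by omega)
        simp [h, hfalse]
  -- terms beyond a block are below the tail sum
  have hAT : ∀ ℓ ℓ' : ℕ, 1 ≤ ℓ → ℓ < ℓ' → w (ℓ' * m) ≤ ∑' j : ℕ, w (ℓ * m + 1 + j) := by
    intro ℓ ℓ' hℓ hlt
    have hml : ℓ * m + 1 ≤ ℓ' * m := by
      have h1 : (ℓ + 1) * m ≤ ℓ' * m := Nat.mul_le_mul_right m (by omega)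
      have h2 : (ℓ + 1) * m = ℓ * m + m := by ring
      omega
    have hj : ℓ * m + 1 + (ℓ' * m - (ℓ * m + 1)) = ℓ' * m := by omega
    have h1 := Summable.le_tsum (htail_core ℓ).1 (ℓ' * m - (ℓ * m + 1)) (fun j _ => (hwpos ℓ j).le)
    rwa [hj] at h1
  constructor
  · intro ℓ hℓ
    have h1 := hpart1 ℓ hℓ
    simp only [hw] at h1
    exact h1
  · rintro ⟨S, hS, hEq⟩
    have hchoice : ∀ ℓ : ℕ, ∃ p : ℝ × ℝ, p ∈ S ∧ w ((ℓ + 1) * m) ∈ Set.Icc p.1 p.2 := by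
      intro ℓ
      have hmem : w ((ℓ + 1) * m) ∈ subsums w := hAmem (ℓ + 1) (by omega)
      rw [hEq] at hmem
      obtain ⟨p, hpS, hp⟩ := Set.mem_iUnion₂.mp hmem
      exact ⟨p, hpS, hp⟩
    choose P hPS hPmem using hchoice
    have hcontra : ∀ i j : ℕ, i < j → P i = P j → False := by
      intro i j hlt hPeq
      have hgapi := hpart1 (i + 1) (by omega)
      set t := ((∑' j : ℕ, w ((i + 1) * m + 1 + j)) + w ((i + 1) * m)) / 2 with ht
      have h1 : (∑' j : ℕ, w ((i + 1) * m + 1 + j)) < t := by rw [ht]; linarith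
      have h2 : t < w ((i + 1) * m) := by rw [ht]; linarith
      have hAj : w ((j + 1) * m) ≤ ∑' j : ℕ, w ((i + 1) * m + 1 + j) :=
        hAT (i + 1) (j + 1) (by omega) (by omega)
      have hmemt : t ∈ Set.Icc (P i).1 (P i).2 := by
        constructor
        · have h3 := (hPmem j).1
          rw [← hPeq] at h3
          exact le_trans h3 (le_trans hAj h1.le)
        · exact le_trans h2.le (hPmem i).2
      have hts : t ∈ subsums w := by
        rw [hEq]
        exact Set.mem_iUnion₂.mpr ⟨P i, hPS i, hmemt⟩
      rcases hgap t hts (i + 1) (by omega) with h | h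
      · linarith
      · linarith
    obtain ⟨i, j, hij, hPeq⟩ := Finite.exists_ne_map_eq_of_infinite
      (fun i : ℕ => (⟨P i, hPS i⟩ : {p // p ∈ S}))
    have hPij : P i = P j := by simpa using congrArg Subtype.val hPeq
    rcases lt_or_gt_of_ne hij with h | h
    · exact hcontra i j h hPij
    · exact hcontra j i h hPij.symm
end

section
/- For 0 < x < ε and ℓ ≥ 1, the tail satisfies ∑_{j > ℓm} w_j(x) ≤ b·K·x^{(ℓ+1)r}/(1 − x^r), while w_{ℓm}(x) ≥ a·k_m·x^{ℓr}; hence if x^r < a·k_m/(b·K + a·k_m) then w_{ℓm}(x) > ∑_{j>ℓm} w_j(x). -/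
open Set Finset

/-- Tail estimate: for `0 < x < ε` and `ℓ ≥ 1`, the tail after the `ℓm`-th term is at most
`b·K·x^{(ℓ+1)r}/(1−xʳ)`, while `w_{ℓm}(x) ≥ a·k_m·x^{ℓr}`; hence if
`xʳ < a·k_m/(b·K + a·k_m)` then `w_{ℓm}(x)` strictly exceeds its tail. -/
theorem stmt_14 (f : ℝ → ℝ) (a b r ε : ℝ) (ha : 0 < a) (hb : 0 < b) (hr : 0 < r)
    (hε : 0 < ε) (hε1 : ε < 1)
    (hmono : MonotoneOn f (Set.Icc 0 ε))
    (hf : ∀ x ∈ Set.Icc (0:ℝ) ε, a * x ^ r ≤ f x ∧ f x ≤ b * x ^ r)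
    (m : ℕ) (hm : 1 ≤ m) (k : ℕ → ℝ)
    (hkmono : ∀ i j, 1 ≤ i → i ≤ j → j ≤ m → k j ≤ k i)
    (hkpos : 0 < k m) :
    ∀ x : ℝ, 0 < x → x < ε → ∀ ℓ : ℕ, 1 ≤ ℓ →
      (∑' j : ℕ, mgTerm k f m (ℓ * m + 1 + j) x) ≤
        b * Ksum k m * x ^ (((ℓ : ℝ) + 1) * r) / (1 - x ^ r) ∧
      a * k m * x ^ ((ℓ : ℝ) * r) ≤ mgTerm k f m (ℓ * m) x ∧
      (x ^ r < a * k m / (b * Ksum k m + a * k m) →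
        (∑' j : ℕ, mgTerm k f m (ℓ * m + 1 + j) x) < mgTerm k f m (ℓ * m) x) := by
  intro x hx hxε ℓ hℓ
  have hx1 : x < 1 := hxε.trans hε1
  have hy0 : (0:ℝ) < x ^ r := Real.rpow_pos_of_pos hx r
  have hy1 : x ^ r < 1 := Real.rpow_lt_one hx.le hx1 hr
  set y := x ^ r with hy
  have hm0 : 0 < m := hm
  haveI : NeZero m := ⟨by omega⟩
  have hxmem : ∀ n : ℕ, 1 ≤ n → x ^ n ∈ Set.Icc (0:ℝ) ε := by
    intro n hn
    constructor
    · positivity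
    · calc x ^ n ≤ x := pow_le_of_le_one hx.le hx1.le (by omega)
        _ ≤ ε := hxε.le
  have hpowr : ∀ n : ℕ, (x ^ n) ^ r = y ^ n := by
    intro n
    rw [← Real.rpow_natCast x n, ← Real.rpow_natCast y n, hy,
      ← Real.rpow_mul hx.le, ← Real.rpow_mul hx.le, mul_comm]
  have hk0 : ∀ i, 1 ≤ i → i ≤ m → 0 < k i := fun i h1 h2 =>
    lt_of_lt_of_le hkpos (hkmono i m h1 h2 le_rfl)
  -- tail term formula
  have hterm : ∀ j : ℕ, mgTerm k f m (ℓ * m + 1 + j) x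
      = k (1 + j % m) * f (x ^ (ℓ + 1 + j / m)) := by
    intro j
    have h1 : ℓ * m + 1 + j - 1 = ℓ * m + j := by
      have h : ℓ * m + 1 + j = (ℓ * m + j) + 1 := by ring
      rw [h, Nat.add_sub_cancel]
    have h2 : m + (ℓ * m + 1 + j) - 1 = j + (ℓ + 1) * m := by
      have h : m + (ℓ * m + 1 + j) = (j + (ℓ + 1) * m) + 1 := by ring
      rw [h, Nat.add_sub_cancel]
    have h3 : (ℓ * m + j) % m = j % m := by
      rw [Nat.mul_comm]; exact Nat.mul_add_mod _ _ _
    have h4 : (j + (ℓ + 1) * m) / m = j / m + (ℓ + 1) :=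
      Nat.add_mul_div_right j (ℓ + 1) hm0
    rw [mgTerm, mgIdx, h1, h2, h3, h4]
    ring_nf
  set c : ℕ → ℝ := fun s => b * k (1 + s) * y ^ (ℓ + 1) with hc
  have hcpos : ∀ s : ℕ, s < m → 0 < c s := by
    intro s hs
    have := hk0 (1 + s) (by omega) (by omega)
    simp only [hc]
    positivity
  set u : ℕ → ℝ := fun j => c (j % m) * y ^ (j / m) with hu
  have hfnonneg : ∀ n : ℕ, 1 ≤ n → 0 ≤ f (x ^ n) := by
    intro n hn
    have h := (hf _ (hxmem n hn)).1
    have h2 : 0 ≤ a * (x ^ n) ^ r := by positivity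
    linarith
  have hterm_nonneg : ∀ j : ℕ, 0 ≤ mgTerm k f m (ℓ * m + 1 + j) x := by
    intro j
    rw [hterm j]
    have hk := hk0 (1 + j % m) (by omega) (by have := Nat.mod_lt j hm0; omega)
    exact mul_nonneg hk.le (hfnonneg _ (le_trans (Nat.le_add_left 1 ℓ) (Nat.le_add_right _ _)))
  have hterm_le : ∀ j : ℕ, mgTerm k f m (ℓ * m + 1 + j) x ≤ u j := by
    intro j
    rw [hterm j]
    have hk := hk0 (1 + j % m) (by omega) (by have := Nat.mod_lt j hm0; omega)
    have hfle := (hf _ (hxmem (ℓ + 1 + j / m) (le_trans (Nat.le_add_left 1 ℓ) (Nat.le_add_right _ _)))).2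
    have he : (x ^ (ℓ + 1 + j / m)) ^ r = y ^ (ℓ + 1) * y ^ (j / m) := by
      rw [hpowr, pow_add]
    have hb2 : f (x ^ (ℓ + 1 + j / m)) ≤ b * (y ^ (ℓ + 1) * y ^ (j / m)) := by
      rw [← he]; exact hfle
    calc k (1 + j % m) * f (x ^ (ℓ + 1 + j / m))
        ≤ k (1 + j % m) * (b * (y ^ (ℓ + 1) * y ^ (j / m))) :=
          mul_le_mul_of_nonneg_left hb2 hk.le
      _ = u j := by simp only [hu, hc]; ring
  -- the comparison series over ℕ × Fin m
  set F : ℕ × Fin m → ℝ := fun p => c (p.2 : ℕ) * y ^ p.1 with hF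
  have hFnonneg : 0 ≤ F := by
    intro p
    exact le_of_lt (by
      have := hcpos (p.2 : ℕ) p.2.isLt
      simp only [hF]
      positivity)
  have hcsum : ∑ s : Fin m, c (s : ℕ) = b * Ksum k m * y ^ (ℓ + 1) := by
    have h1 : ∑ s : Fin m, c (s : ℕ) = ∑ i ∈ Finset.range m, c i :=
      Fin.sum_univ_eq_sum_range _ _
    have h2 : Ksum k m = ∑ i ∈ Finset.range m, k (1 + i) := by
      rw [Ksum, ← Finset.Ico_add_one_right_eq_Icc, Finset.sum_Ico_eq_sum_range]
      simp
    rw [h1, h2]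
    simp only [hc]
    rw [← Finset.sum_mul, ← Finset.mul_sum]
  have hFsum : Summable F := by
    rw [summable_prod_of_nonneg hFnonneg]
    constructor
    · intro q
      exact Summable.of_finite
    · have heq : ∀ q : ℕ, (∑' s : Fin m, F (q, s)) = (b * Ksum k m * y ^ (ℓ + 1)) * y ^ q := by
        intro q
        rw [tsum_fintype]
        simp only [hF]
        rw [← Finset.sum_mul, hcsum]
      simp only [heq]
      exact (summable_geometric_of_lt_one hy0.le hy1).mul_left _
  have hcomp : ∀ j : ℕ, u j = F ((Nat.divModEquiv m) j) := by
    intro j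
    simp [hF, hu, Nat.divModEquiv, Fin.val_natCast]
  have husum : Summable u := by
    have : Summable (F ∘ (Nat.divModEquiv m)) := (Nat.divModEquiv m).summable_iff.mpr hFsum
    exact this.congr (fun j => (hcomp j).symm)
  have htailsum : Summable (fun j => mgTerm k f m (ℓ * m + 1 + j) x) :=
    Summable.of_nonneg_of_le hterm_nonneg hterm_le husum
  have hutsum : ∑' j, u j = b * Ksum k m * y ^ (ℓ + 1) * (1 - y)⁻¹ := by
    have h1 : ∑' j, u j = ∑' p : ℕ × Fin m, F p := by
      rw [tsum_congr hcomp]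
      exact (Nat.divModEquiv m).tsum_eq F
    rw [h1, Summable.tsum_prod' hFsum (fun q => Summable.of_finite)]
    have heq : ∀ q : ℕ, (∑' s : Fin m, F (q, s)) = (b * Ksum k m * y ^ (ℓ + 1)) * y ^ q := by
      intro q
      rw [tsum_fintype]
      simp only [hF]
      rw [← Finset.sum_mul, hcsum]
    rw [tsum_congr heq, tsum_mul_left, tsum_geometric_of_lt_one hy0.le hy1]
  have hxp1 : x ^ (((ℓ:ℝ) + 1) * r) = y ^ (ℓ + 1) := by
    have h : ((ℓ:ℝ) + 1) * r = r * ((ℓ + 1 : ℕ) : ℝ) := by push_cast; ring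
    rw [h, Real.rpow_mul hx.le, hy, Real.rpow_natCast]
  have hxp2 : x ^ ((ℓ:ℝ) * r) = y ^ ℓ := by
    have h : (ℓ:ℝ) * r = r * ((ℓ : ℕ) : ℝ) := by push_cast; ring
    rw [h, Real.rpow_mul hx.le, hy, Real.rpow_natCast]
  -- Part 1
  have part1 : (∑' j : ℕ, mgTerm k f m (ℓ * m + 1 + j) x) ≤
      b * Ksum k m * x ^ (((ℓ : ℝ) + 1) * r) / (1 - y) := by
    rw [hxp1, div_eq_mul_inv]
    rw [← hutsum]
    exact Summable.tsum_le_tsum hterm_le htailsum husum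
  -- Part 2
  have hterm2 : mgTerm k f m (ℓ * m) x = k m * f (x ^ ℓ) := by
    obtain ⟨m', rfl⟩ : ∃ m', m = m' + 1 := ⟨m - 1, by omega⟩
    obtain ⟨l', rfl⟩ : ∃ l', ℓ = l' + 1 := ⟨ℓ - 1, by omega⟩
    have h1 : (l' + 1) * (m' + 1) - 1 = m' + l' * (m' + 1) := by
      have h : (l' + 1) * (m' + 1) = (m' + l' * (m' + 1)) + 1 := by ring
      rw [h, Nat.add_sub_cancel]
    have h2 : (m' + 1) + (l' + 1) * (m' + 1) - 1 = m' + (l' + 1) * (m' + 1) := by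
      have h : (m' + 1) + (l' + 1) * (m' + 1) = (m' + (l' + 1) * (m' + 1)) + 1 := by ring
      rw [h, Nat.add_sub_cancel]
    rw [mgTerm, mgIdx, h1, h2, Nat.add_mul_mod_self_right,
      Nat.mod_eq_of_lt (by omega), Nat.add_mul_div_right _ _ (by omega : 0 < m' + 1),
      Nat.div_eq_of_lt (by omega)]
    norm_num [Nat.add_comm]
  have part2 : a * k m * x ^ ((ℓ:ℝ) * r) ≤ mgTerm k f m (ℓ * m) x := by
    rw [hterm2, hxp2]
    have hlow := (hf _ (hxmem ℓ hℓ)).1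
    rw [hpowr ℓ] at hlow
    calc a * k m * y ^ ℓ = k m * (a * y ^ ℓ) := by ring
      _ ≤ k m * f (x ^ ℓ) := mul_le_mul_of_nonneg_left hlow hkpos.le
  refine ⟨part1, part2, ?_⟩
  -- Part 3
  intro hθ
  have hKk : k m ≤ Ksum k m := by
    apply Finset.single_le_sum (f := k)
    · intro i hi
      simp only [Finset.mem_Icc] at hi
      exact (hk0 i hi.1 hi.2).le
    · simp only [Finset.mem_Icc]
      omega
  have hK0 : 0 < Ksum k m := lt_of_lt_of_le hkpos hKk
  have hd : 0 < b * Ksum k m + a * k m := by positivity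
  have hθ' : y * (b * Ksum k m + a * k m) < a * k m := (lt_div_iff₀ hd).mp hθ
  have hy1' : 0 < 1 - y := by linarith
  have hmid : b * Ksum k m * x ^ (((ℓ:ℝ) + 1) * r) / (1 - y) < a * k m * x ^ ((ℓ:ℝ) * r) := by
    rw [hxp1, hxp2, div_lt_iff₀ hy1']
    have hyl : 0 < y ^ ℓ := pow_pos hy0 ℓ
    have hkey : b * Ksum k m * y < a * k m * (1 - y) := by nlinarith
    calc b * Ksum k m * y ^ (ℓ + 1) = (b * Ksum k m * y) * y ^ ℓ := by ring
      _ < (a * k m * (1 - y)) * y ^ ℓ := by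
          exact mul_lt_mul_of_pos_right hkey hyl
      _ = a * k m * y ^ ℓ * (1 - y) := by ring
  calc (∑' j : ℕ, mgTerm k f m (ℓ * m + 1 + j) x)
      ≤ b * Ksum k m * x ^ (((ℓ:ℝ) + 1) * r) / (1 - y) := part1
    _ < a * k m * x ^ ((ℓ:ℝ) * r) := hmid
    _ ≤ mgTerm k f m (ℓ * m) x := part2
end

section
/- Suppose μ, λ > 0 and s ∈ ℕ are such that each of μ, μ+λ, μ+2λ, ..., μ+sλ is a subsum of k₁+...+k_m (i.e., for each 0 ≤ t ≤ s there exist c_i ∈ {0,1} with μ + tλ = ∑ c_i k_i). Set d_{CI} = (b/(s·a + b))^{1/r}. If d_{CI} < ε, then for every x ∈ [d_{CI}, ε) the achievement set E(w_n(x)) contains a nontrivial compact interval. -/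
open Set Finset

private lemma interval_fill (z : ℕ → ℝ) (hz : ∀ n, 0 < z n) (hsum : Summable z)
    (s : ℕ) (hkak : ∀ n, z n ≤ s * ∑' j, z (n + 1 + j))
    (Y : ℝ) (hY0 : 0 ≤ Y) (hY1 : Y ≤ s * ∑' n, z n) :
    ∃ t : ℕ → ℕ, (∀ n, t n ≤ s) ∧ HasSum (fun n => (t n : ℝ) * z n) Y := by
  set T : ℕ → ℝ := fun n => ∑' j, z (n + j) with hTdef
  have hTsum : ∀ n, Summable (fun j => z (n + j)) := fun n =>
    hsum.comp_injective (add_right_injective n)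
  have hTsplit : ∀ n, T n = z n + T (n + 1) := by
    intro n
    have h1 : ∑' j, z (n + j) = z (n + 0) + ∑' j, z (n + (j + 1)) := Summable.tsum_eq_zero_add (hTsum n)
    have h2 : ∑' j, z (n + (j + 1)) = ∑' j, z ((n + 1) + j) :=
      tsum_congr fun j => by rw [show n + (j + 1) = (n + 1) + j by omega]
    rw [hTdef]
    simp only []
    rw [h1, h2, add_zero]
  have hT0 : Filter.Tendsto T Filter.atTop (nhds 0) := by
    have h := tendsto_sum_nat_add z
    have he : T = fun i => ∑' k, z (k + i) := by
      funext i; exact tsum_congr fun j => by rw [add_comm]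
    rw [he]; exact h
  let y : ℕ → ℝ := fun n => Nat.rec Y (fun n yn => yn - (min s ⌊yn / z n⌋₊ : ℕ) * z n) n
  let t : ℕ → ℕ := fun n => min s ⌊y n / z n⌋₊
  have hy_succ : ∀ n, y (n + 1) = y n - (t n : ℝ) * z n := fun n => rfl
  have hinv : ∀ n, 0 ≤ y n ∧ y n ≤ s * T n := by
    intro n
    induction n with
    | zero =>
      refine ⟨hY0, ?_⟩
      have : T 0 = ∑' n, z n := tsum_congr fun j => by rw [zero_add]
      rw [this]; exact hY1
    | succ n ih =>
      obtain ⟨h0, h1⟩ := ih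
      have hfl : (t n : ℝ) ≤ y n / z n := by
        calc (t n : ℝ) ≤ (⌊y n / z n⌋₊ : ℝ) := by exact_mod_cast min_le_right _ _
          _ ≤ y n / z n := Nat.floor_le (div_nonneg h0 (hz n).le)
      have hle : (t n : ℝ) * z n ≤ y n := by
        have h := mul_le_mul_of_nonneg_right hfl (hz n).le
        rwa [div_mul_cancel₀ _ (hz n).ne'] at h
      constructor
      · rw [hy_succ]; linarith
      · rw [hy_succ]
        rcases le_or_gt s ⌊y n / z n⌋₊ with h | h
        · have ht : t n = s := min_eq_left h
          have hsp := hTsplit n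
          rw [ht]
          nlinarith [(hz n).le]
        · have ht : t n = ⌊y n / z n⌋₊ := min_eq_right h.le
          have h2 : y n / z n < (⌊y n / z n⌋₊ : ℝ) + 1 := Nat.lt_floor_add_one _
          have h3 : y n < ((⌊y n / z n⌋₊ : ℝ) + 1) * z n := by
            have h4 := mul_lt_mul_of_pos_right h2 (hz n)
            rwa [div_mul_cancel₀ _ (hz n).ne'] at h4
          have h4 : z n ≤ s * T (n + 1) := hkak n
          rw [ht]; nlinarith
  have hts : ∀ n, t n ≤ s := fun n => min_le_left _ _
  have hpart : ∀ n, ∑ i ∈ Finset.range n, (t i : ℝ) * z i = Y - y n := by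
    intro n
    induction n with
    | zero => simp [show y 0 = Y from rfl]
    | succ n ih => rw [Finset.sum_range_succ, ih, hy_succ]; ring
  have hsummable : Summable (fun n => (t n : ℝ) * z n) := by
    refine Summable.of_nonneg_of_le (fun n => mul_nonneg (Nat.cast_nonneg _) (hz n).le)
      (fun n => mul_le_mul_of_nonneg_right (by exact_mod_cast hts n) (hz n).le)
      (hsum.mul_left (s : ℝ))
  have hyend : Filter.Tendsto y Filter.atTop (nhds 0) := by
    apply squeeze_zero (fun n => (hinv n).1) (fun n => (hinv n).2)
    have := hT0.const_mul (s : ℝ)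
    simpa using this
  refine ⟨t, hts, (hsummable.hasSum_iff_tendsto_nat).2 ?_⟩
  have h5 : Filter.Tendsto (fun n => Y - y n) Filter.atTop (nhds (Y - 0)) :=
    tendsto_const_nhds.sub hyend
  simp only [sub_zero] at h5
  have h6 : (fun n => ∑ i ∈ Finset.range n, (t i : ℝ) * z i) = fun n => Y - y n :=
    funext hpart
  rw [h6]; exact h5

/-- If `μ, μ+λ, …, μ+sλ` are all subsums of `k₁ + ⋯ + k_m` and `d_{CI} = (b/(sa+b))^{1/r} < ε`,
then for every `x ∈ [d_{CI}, ε)` the achievement set contains a nontrivial compact interval. -/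
theorem stmt_15 (f : ℝ → ℝ) (a b r ε : ℝ) (ha : 0 < a) (hb : 0 < b) (hr : 0 < r)
    (hε : 0 < ε) (hε1 : ε < 1)
    (hmono : MonotoneOn f (Set.Icc 0 ε))
    (hf : ∀ x ∈ Set.Icc (0:ℝ) ε, a * x ^ r ≤ f x ∧ f x ≤ b * x ^ r)
    (m : ℕ) (hm : 1 ≤ m) (k : ℕ → ℝ)
    (hkmono : ∀ i j, 1 ≤ i → i ≤ j → j ≤ m → k j ≤ k i)
    (hkpos : 0 < k m)
    (μ lam : ℝ) (hμ : 0 < μ) (hlam : 0 < lam) (s : ℕ) (hs : 1 ≤ s)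
    (hsubsum : ∀ t : ℕ, t ≤ s → ∃ c : ℕ → Bool,
      μ + t * lam = ∑ i ∈ Finset.Icc 1 m, if c i then k i else 0)
    (dCI : ℝ) (hdCI : dCI = (b / (s * a + b)) ^ (1 / r)) (hdCIε : dCI < ε) :
    ∀ x ∈ Set.Ico dCI ε, ∃ p q : ℝ, p < q ∧
      Set.Icc p q ⊆ subsums (fun n => mgTerm k f m n x) := by
  have hm0 : 0 < m := hm
  intro x hx
  obtain ⟨hxd, hxε⟩ := hx
  have hden : (0:ℝ) < s * a + b := by positivity
  have hcpos : (0:ℝ) < b / (s * a + b) := by positivity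
  have hdpos : 0 < dCI := by rw [hdCI]; exact Real.rpow_pos_of_pos hcpos _
  have hx0 : 0 < x := lt_of_lt_of_le hdpos hxd
  have hx1 : x < 1 := lt_trans hxε hε1
  set ρ := x ^ r with hρdef
  have hρ0 : 0 < ρ := Real.rpow_pos_of_pos hx0 r
  have hρ1 : ρ < 1 := Real.rpow_lt_one hx0.le hx1 hr
  have hρc : b / (s * a + b) ≤ ρ := by
    have h1 : dCI ^ r ≤ x ^ r := Real.rpow_le_rpow hdpos.le hxd hr.le
    have h2 : ((b / (s * a + b)) ^ (1 / r)) ^ r = b / (s * a + b) := by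
      rw [← Real.rpow_mul hcpos.le, one_div_mul_cancel hr.ne', Real.rpow_one]
    rw [hdCI, h2] at h1
    exact h1
  have hkey : b * (1 - ρ) ≤ (s : ℝ) * a * ρ := by
    have h := (div_le_iff₀ hden).mp hρc
    nlinarith
  -- the block values
  set F : ℕ → ℝ := fun q => f (x ^ (q + 1)) with hFdef
  have hpow : ∀ n : ℕ, (x ^ n) ^ r = ρ ^ n := by
    intro n
    rw [← Real.rpow_natCast x n, ← Real.rpow_mul hx0.le, mul_comm, Real.rpow_mul hx0.le,
      Real.rpow_natCast]
  have hxmem : ∀ q : ℕ, x ^ (q + 1) ∈ Set.Icc (0:ℝ) ε := by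
    intro q
    constructor
    · positivity
    · calc x ^ (q + 1) ≤ x ^ 1 := pow_le_pow_of_le_one hx0.le hx1.le (by omega)
        _ = x := pow_one x
        _ ≤ ε := hxε.le
  have hFa : ∀ q, a * ρ ^ (q + 1) ≤ F q := by
    intro q
    have h := (hf _ (hxmem q)).1
    rwa [hpow] at h
  have hFb : ∀ q, F q ≤ b * ρ ^ (q + 1) := by
    intro q
    have h := (hf _ (hxmem q)).2
    rwa [hpow] at h
  have hF0 : ∀ q, 0 < F q := fun q => lt_of_lt_of_le (by positivity) (hFa q)
  have hgeo : Summable (fun q : ℕ => b * ρ ^ (q + 1)) := by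
    have h := (summable_geometric_of_lt_one hρ0.le hρ1).mul_left (b * ρ)
    exact h.congr (fun q => by rw [pow_succ]; ring)
  have hFsum : Summable F := Summable.of_nonneg_of_le (fun q => (hF0 q).le) hFb hgeo
  have hSF : 0 < ∑' q, F q :=
    lt_of_lt_of_le (hF0 0) (Summable.le_tsum hFsum 0 (fun j _ => (hF0 j).le))
  -- Kakeya condition
  have hFshift : ∀ n, Summable (fun j => F (n + j)) := fun n =>
    hFsum.comp_injective (add_right_injective n)
  have hFkak : ∀ n, F n ≤ s * ∑' j, F (n + 1 + j) := by
    intro n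
    have hsum2 : Summable (fun j : ℕ => a * ρ ^ (n + 2 + j)) := by
      have h := (summable_geometric_of_lt_one hρ0.le hρ1).mul_left (a * ρ ^ (n + 2))
      exact h.congr (fun j => by rw [pow_add]; ring)
    have h1 : ∑' j, a * ρ ^ (n + 2 + j) ≤ ∑' j, F (n + 1 + j) := by
      refine Summable.tsum_le_tsum ?_ hsum2 (hFshift (n + 1))
      intro j
      rw [show n + 2 + j = (n + 1 + j) + 1 by omega]
      exact hFa (n + 1 + j)
    have h2 : ∑' j : ℕ, a * ρ ^ (n + 2 + j) = a * ρ ^ (n + 2) * (1 - ρ)⁻¹ := by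
      have hc : ∀ j : ℕ, a * ρ ^ (n + 2 + j) = (a * ρ ^ (n + 2)) * ρ ^ j := fun j => by
        rw [pow_add]; ring
      rw [tsum_congr hc, tsum_mul_left, tsum_geometric_of_lt_one hρ0.le hρ1]
    have h1ρ : (0:ℝ) < 1 - ρ := by linarith
    have h3 : b * ρ ^ (n + 1) ≤ (s:ℝ) * (a * ρ ^ (n + 2) * (1 - ρ)⁻¹) := by
      rw [show (s:ℝ) * (a * ρ ^ (n + 2) * (1 - ρ)⁻¹) = ((s:ℝ) * a * ρ ^ (n + 2)) / (1 - ρ) by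
        ring, le_div_iff₀ h1ρ]
      have hu : (0:ℝ) < ρ ^ (n + 1) := pow_pos hρ0 _
      have h5 := mul_le_mul_of_nonneg_right hkey hu.le
      calc b * ρ ^ (n + 1) * (1 - ρ) = b * (1 - ρ) * ρ ^ (n + 1) := by ring
        _ ≤ (s:ℝ) * a * ρ * ρ ^ (n + 1) := h5
        _ = (s:ℝ) * a * ρ ^ (n + 2) := by ring
    calc F n ≤ b * ρ ^ (n + 1) := hFb n
      _ ≤ (s:ℝ) * (a * ρ ^ (n + 2) * (1 - ρ)⁻¹) := h3
      _ = (s:ℝ) * ∑' j, a * ρ ^ (n + 2 + j) := by rw [h2]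
      _ ≤ (s:ℝ) * ∑' j, F (n + 1 + j) := by
          exact mul_le_mul_of_nonneg_left h1 (by positivity)
  -- set up interval_fill input
  have hzsum : Summable (fun q => lam * F q) := hFsum.mul_left lam
  have hz0 : ∀ n, 0 < lam * F n := fun n => mul_pos hlam (hF0 n)
  have hztsum : ∑' n, lam * F n = lam * ∑' q, F q := tsum_mul_left
  have hzkak : ∀ n, lam * F n ≤ s * ∑' j, lam * F (n + 1 + j) := by
    intro n
    have h1 : ∑' j, lam * F (n + 1 + j) = lam * ∑' j, F (n + 1 + j) := tsum_mul_left
    rw [h1]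
    have h2 := mul_le_mul_of_nonneg_left (hFkak n) hlam.le
    calc lam * F n ≤ lam * ((s:ℝ) * ∑' j, F (n + 1 + j)) := h2
      _ = (s:ℝ) * (lam * ∑' j, F (n + 1 + j)) := by ring
  refine ⟨μ * ∑' q, F q, μ * ∑' q, F q + s * lam * ∑' q, F q, ?_, ?_⟩
  · have hs' : (0:ℝ) < s := by exact_mod_cast hs
    have := mul_pos (mul_pos hs' hlam) hSF
    linarith
  intro y hy
  obtain ⟨hy1, hy2⟩ := hy
  have hY0 : 0 ≤ y - μ * ∑' q, F q := by linarith
  have hY1 : y - μ * ∑' q, F q ≤ s * ∑' n, lam * F n := by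
    rw [hztsum]; nlinarith
  obtain ⟨t, hts, htsum⟩ := interval_fill (fun q => lam * F q) hz0 hzsum s hzkak _ hY0 hY1
  choose cb hcb using fun q => hsubsum (t q) (hts q)
  haveI : NeZero m := ⟨hm0.ne'⟩
  set G : ℕ × Fin m → ℝ :=
    fun p => if cb p.1 (1 + (p.2 : ℕ)) then k (1 + (p.2 : ℕ)) * F p.1 else 0 with hGdef
  have hfiber : ∀ q, HasSum (fun i : Fin m => G (q, i)) ((μ + (t q : ℝ) * lam) * F q) := by
    intro q
    simp only [hGdef]
    have h1 : ∑ i : Fin m, (if cb q (1 + (i : ℕ)) then k (1 + (i : ℕ)) * F q else 0)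
        = (μ + (t q : ℝ) * lam) * F q := by
      calc ∑ i : Fin m, (if cb q (1 + (i : ℕ)) then k (1 + (i : ℕ)) * F q else 0)
          = ∑ j ∈ Finset.range m, (if cb q (1 + j) then k (1 + j) * F q else 0) :=
            Fin.sum_univ_eq_sum_range (fun j => if cb q (1 + j) then k (1 + j) * F q else 0) m
        _ = ∑ j ∈ Finset.range m, (if cb q (1 + j) then k (1 + j) else 0) * F q := by
            refine Finset.sum_congr rfl fun j _ => ?_
            split <;> simp
        _ = ∑ j ∈ Finset.Icc 1 m, (if cb q j then k j else 0) * F q := by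
            rw [show Finset.Icc 1 m = Finset.Ico 1 (m + 1) by rfl,
              Finset.sum_Ico_eq_sum_range]
            simp
        _ = (∑ j ∈ Finset.Icc 1 m, if cb q j then k j else 0) * F q := by
            rw [Finset.sum_mul]
        _ = (μ + (t q : ℝ) * lam) * F q := by rw [← hcb q]
    exact h1 ▸ hasSum_fintype _
  have hgy : HasSum (fun q => (μ + (t q : ℝ) * lam) * F q) y := by
    have h1 : HasSum (fun q => μ * F q) (μ * ∑' q, F q) := hFsum.hasSum.mul_left μ
    have h2 := h1.add htsum
    have h3 : (fun q => μ * F q + (t q : ℝ) * (lam * F q))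
        = fun q => (μ + (t q : ℝ) * lam) * F q := by
      funext q; ring
    have h4 : μ * ∑' q, F q + (y - μ * ∑' q, F q) = y := by ring
    rw [h3, h4] at h2
    exact h2
  have hGnn : ∀ p, 0 ≤ G p := by
    intro p
    simp only [hGdef]
    split
    · refine mul_nonneg ?_ (hF0 _).le
      refine le_trans hkpos.le (hkmono (1 + (p.2 : ℕ)) m (by omega) ?_ le_rfl)
      have := p.2.isLt
      omega
    · exact le_refl 0
  have hGsum : Summable G := by
    rw [summable_prod_of_nonneg (fun p => hGnn p)]
    constructor
    · intro q; exact Summable.of_finite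
    · have he : (fun q => ∑' i : Fin m, G (q, i)) = fun q => (μ + (t q : ℝ) * lam) * F q :=
        funext fun q => (hfiber q).tsum_eq
      rw [he]
      exact hgy.summable
  obtain ⟨S, hS⟩ := hGsum
  have hgS : HasSum (fun q => (μ + (t q : ℝ) * lam) * F q) S := hS.prod_fiberwise hfiber
  have hSy : S = y := hgS.unique hgy
  rw [hSy] at hS
  have he2 : HasSum (G ∘ (Nat.divModEquiv m)) y := (Equiv.hasSum_iff _).2 hS
  refine ⟨fun N => cb ((N - 1) / m) (1 + (N - 1) % m), ?_⟩
  have hfun : (fun n : ℕ =>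
        if cb ((n + 1 - 1) / m) (1 + (n + 1 - 1) % m) then mgTerm k f m (n + 1) x else 0)
      = G ∘ (Nat.divModEquiv m) := by
    funext n
    have hmod : ((Nat.divModEquiv m n).2 : ℕ) = n % m := by
      simp [Nat.divModEquiv, Fin.val_natCast]
    have hdiv : (Nat.divModEquiv m n).1 = n / m := rfl
    simp only [Function.comp_apply, hGdef]
    rw [hmod, hdiv]
    rw [show n + 1 - 1 = n from rfl]
    congr 1
    rw [mgTerm]
    simp only [mgIdx]
    rw [show (n + 1) - 1 = n from rfl, show m + (n + 1) - 1 = m + n by omega,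
      Nat.add_div_left n hm0]
  exact hfun ▸ he2
end
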